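/- arXiv:2602.06539 — 5 statements merged into one kernel-verified Lean document; each statement's English description precedes it below -/
import Mathlib

section
/- Let p > 1 and let x1, y1, x2, y2 be nonnegative reals satisfying the cyclical monotonicity inequality |x1 − y1|^p + |x2 − y2|^p ≤ |x1 − y2|^p + |x2 − y1|^p. If x1 < x2 then y1 ≤ y2. -/
lemma abs_rpow_strictConvex {p : ℝ} (hp : 1 < p) :
    StrictConvexOn ℝ Set.univ (fun t : ℝ => |t| ^ p) := by
  have hrc := strictConvexOn_rpow hp
  have hp0 : 0 < p := lt_trans one_pos hp
  refine ⟨convex_univ, ?_⟩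
  intro x _ y _ hxy a b ha hb hab
  simp only [smul_eq_mul]
  by_cases habs : |x| = |y|
  · -- then y = -x with x ≠ 0
    have hx0 : x ≠ 0 := by
      rintro rfl
      have : y = 0 := by simpa using habs.symm
      exact hxy this.symm
    have hy : y = -x := by
      rcases abs_eq_abs.mp habs with h | h
      · exact absurd h hxy
      · linarith
    subst hy
    have h1 : |a * x + b * (-x)| = |a - b| * |x| := by
      rw [← abs_mul, mul_comm]
      congr 1
      ring
    have hab1 : |a - b| < 1 := by
      rw [abs_lt]; constructor <;> linarith
    have hxpos : 0 < |x| := abs_pos.mpr hx0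
    have h2 : |a - b| * |x| < |x| := by
      nlinarith
    calc |a * x + b * (-x)| ^ p = (|a - b| * |x|) ^ p := by rw [h1]
      _ < |x| ^ p := by
          exact Real.rpow_lt_rpow (by positivity) h2 hp0
      _ = a * |x| ^ p + b * |(-x)| ^ p := by rw [abs_neg]; nlinarith [hab, Real.rpow_nonneg (abs_nonneg x) p]
  · have htri : |a * x + b * y| ≤ a * |x| + b * |y| := by
      calc |a * x + b * y| ≤ |a * x| + |b * y| := abs_add_le _ _
        _ = a * |x| + b * |y| := by rw [abs_mul, abs_mul, abs_of_pos ha, abs_of_pos hb]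
    have hkey : (a * |x| + b * |y|) ^ p < a * |x| ^ p + b * |y| ^ p := by
      have := hrc.2 (abs_nonneg x) (abs_nonneg y) habs ha hb hab
      simpa using this
    calc |a * x + b * y| ^ p ≤ (a * |x| + b * |y|) ^ p :=
          Real.rpow_le_rpow (abs_nonneg _) htri (le_of_lt hp0)
      _ < a * |x| ^ p + b * |y| ^ p := hkey

/-- Monotonicity lemma for 1D optimal transport with cost `|x−y|^p`, `p > 1`:
if nonnegative reals satisfy the cyclical monotonicity inequality
`|x1 − y1|^p + |x2 − y2|^p ≤ |x1 − y2|^p + |x2 − y1|^p` and `x1 < x2`, then `y1 ≤ y2`.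
(Here `^` denotes the real power `Real.rpow`.) -/
theorem stmt2 (p x1 y1 x2 y2 : ℝ) (hp : 1 < p)
    (hx1 : 0 ≤ x1) (hy1 : 0 ≤ y1) (hx2 : 0 ≤ x2) (hy2 : 0 ≤ y2)
    (hcm : |x1 - y1| ^ p + |x2 - y2| ^ p ≤ |x1 - y2| ^ p + |x2 - y1| ^ p)
    (hlt : x1 < x2) : y1 ≤ y2 := by
  by_contra h
  push_neg at h
  set g : ℝ → ℝ := fun t => |t| ^ p with hg
  have hsc := abs_rpow_strictConvex hp
  set c : ℝ := x1 - y1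
  set e : ℝ := x2 - y2
  set a : ℝ := x1 - y2
  set b : ℝ := x2 - y1
  have hce : c < e := by simp only [c, e]; linarith
  have hca : c < a := by simp only [c, a]; linarith
  have hae : a < e := by simp only [a, e]; linarith
  set t : ℝ := (e - a) / (e - c) with ht
  have hec : 0 < e - c := by linarith
  have ht0 : 0 < t := div_pos (by linarith) hec
  have ht1 : t < 1 := (div_lt_one hec).mpr (by linarith)
  have hsum : t + (1 - t) = 1 := by ring
  have hA : a = t * c + (1 - t) * e := by
    rw [ht]; field_simp; ring
  have hB : b = (1 - t) * c + t * e := by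
    have : a + b = c + e := by simp only [a, b, c, e]; ring
    field_simp [ht]; nlinarith [this]
  have hne : c ≠ e := ne_of_lt hce
  have h1 : g a < t * g c + (1 - t) * g e := by
    have := hsc.2 (Set.mem_univ c) (Set.mem_univ e) hne ht0 (by linarith) hsum
    simpa [smul_eq_mul, ← hA] using this
  have h2 : g b < (1 - t) * g c + t * g e := by
    have := hsc.2 (Set.mem_univ c) (Set.mem_univ e) hne (by linarith : (0:ℝ) < 1 - t) ht0 (by ring)
    simpa [smul_eq_mul, ← hB] using this
  have : g a + g b < g c + g e := by linarith
  simp only [g] at this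
  linarith [hcm, this]
end

section
/- Let μ, ν be nonnegative Borel measures on (0,∞) with F_μ(x) = μ([x,∞)) < ∞ and F_ν(x) = ν([x,∞)) < ∞ for all x > 0, and let γ_mon = (F_μ⁻¹, F_ν⁻¹) # L¹([0,∞)) be the pushforward of Lebesgue measure under the pair of generalized inverses. Then for all a, b > 0, γ_mon([a,∞) × [b,∞)) = min(F_μ(a), F_ν(b)). -/
open MeasureTheory Set Filter

/-- Generalized inverse of the reversed distribution function `x ↦ μ([x,∞))`,
with `sup ∅ = 0` (real supremum). -/
noncomputable def Finv (μ : Measure ℝ) (m : ℝ) : ℝ :=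
  sSup {t : ℝ | 0 ≤ t ∧ ENNReal.ofReal m ≤ μ (Set.Ici t)}

lemma Finv_nonneg (μ : Measure ℝ) (m : ℝ) : 0 ≤ Finv μ m := by
  unfold Finv
  set S := {t : ℝ | 0 ≤ t ∧ ENNReal.ofReal m ≤ μ (Set.Ici t)} with hS
  by_cases hne : S.Nonempty
  · by_cases hbdd : BddAbove S
    · obtain ⟨t, ht⟩ := hne
      exact ht.1.trans (le_csSup hbdd ht)
    · rw [Real.sSup_of_not_bddAbove hbdd]
  · rw [Set.not_nonempty_iff_eq_empty] at hne
    rw [hne, Real.sSup_empty]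

lemma Finv_of_nonpos (μ : Measure ℝ) {m : ℝ} (hm : m ≤ 0) : Finv μ m = 0 := by
  unfold Finv
  have h1 : {t : ℝ | 0 ≤ t ∧ ENNReal.ofReal m ≤ μ (Set.Ici t)} = Set.Ici 0 := by
    ext t
    simp [ENNReal.ofReal_eq_zero.mpr hm]
  rw [h1, Real.sSup_of_not_bddAbove (not_bddAbove_Ici 0)]

lemma bddAbove_aux (μ : Measure ℝ) (hloc : ∀ x : ℝ, 0 < x → μ (Set.Ici x) < ⊤)
    {m : ℝ} (hm : 0 < m) :
    BddAbove {t : ℝ | 0 ≤ t ∧ ENNReal.ofReal m ≤ μ (Set.Ici t)} := by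
  have htend : Tendsto (fun n : ℕ => μ (Set.Ici ((n : ℝ) + 1))) atTop (nhds 0) := by
    have h := MeasureTheory.tendsto_measure_iInter_atTop (μ := μ)
      (s := fun n : ℕ => Set.Ici ((n : ℝ) + 1))
      (fun n => measurableSet_Ici.nullMeasurableSet)
      (fun i j hij => Set.Ici_subset_Ici.mpr (by
        have : (i : ℝ) ≤ j := Nat.cast_le.mpr hij
        linarith))
      ⟨0, (by simpa using (hloc 1 one_pos).ne : μ (Set.Ici ((0:ℕ) + 1 : ℝ)) ≠ ⊤)⟩
    have hempty : (⋂ n : ℕ, Set.Ici ((n : ℝ) + 1)) = ∅ := by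
      ext x
      simp only [Set.mem_iInter, Set.mem_Ici, Set.mem_empty_iff_false, iff_false, not_forall]
      obtain ⟨n, hn⟩ := exists_nat_gt x
      exact ⟨n, by push_neg; linarith⟩
    rw [hempty, measure_empty] at h
    exact h
  have hev : ∀ᶠ n : ℕ in atTop, μ (Set.Ici ((n : ℝ) + 1)) < ENNReal.ofReal m :=
    htend.eventually (Iio_mem_nhds (by simpa using ENNReal.ofReal_pos.mpr hm))
  obtain ⟨N, hN⟩ := hev.exists
  refine ⟨(N : ℝ) + 1, fun t ht => ?_⟩
  by_contra hcon
  push_neg at hcon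
  have : μ (Set.Ici t) ≤ μ (Set.Ici ((N : ℝ) + 1)) :=
    measure_mono (Set.Ici_subset_Ici.mpr hcon.le)
  exact absurd (ht.2.trans this) (not_le.mpr hN)

lemma Finv_ge_iff (μ : Measure ℝ) (hloc : ∀ x : ℝ, 0 < x → μ (Set.Ici x) < ⊤)
    {a m : ℝ} (ha : 0 < a) (hm : 0 < m) :
    a ≤ Finv μ m ↔ ENNReal.ofReal m ≤ μ (Set.Ici a) := by
  set S := {t : ℝ | 0 ≤ t ∧ ENNReal.ofReal m ≤ μ (Set.Ici t)} with hSdef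
  have hbdd : BddAbove S := bddAbove_aux μ hloc hm
  constructor
  · intro h
    have hne : S.Nonempty := by
      by_contra hcon
      rw [Set.not_nonempty_iff_eq_empty] at hcon
      rw [Finv, ← hSdef, hcon, Real.sSup_empty] at h
      linarith
    have key : ∀ t : ℝ, t < a → ENNReal.ofReal m ≤ μ (Set.Ici t) := by
      intro t ht
      obtain ⟨s, hsS, hts⟩ := exists_lt_of_lt_csSup hne (ht.trans_le h)
      exact hsS.2.trans (measure_mono (Set.Ici_subset_Ici.mpr hts.le))
    -- take t n = a - a / (n+2), tends to a from below
    have htend : Tendsto (fun n : ℕ => μ (Set.Ici (a - a / ((n : ℝ) + 2)))) atTop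
        (nhds (μ (Set.Ici a))) := by
      have h := MeasureTheory.tendsto_measure_iInter_atTop (μ := μ)
        (s := fun n : ℕ => Set.Ici (a - a / ((n : ℝ) + 2)))
        (fun n => measurableSet_Ici.nullMeasurableSet)
        (fun i j hij => Set.Ici_subset_Ici.mpr (by
          have : (i : ℝ) ≤ j := Nat.cast_le.mpr hij
          have h2 : (0:ℝ) < (i:ℝ) + 2 := by positivity
          have h3 : (0:ℝ) < (j:ℝ) + 2 := by positivity
          have h4 : a / ((j:ℝ) + 2) ≤ a / ((i:ℝ) + 2) := by gcongr
          linarith))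
        ⟨0, ?_⟩
      · have hI : (⋂ n : ℕ, Set.Ici (a - a / ((n : ℝ) + 2))) = Set.Ici a := by
          ext x
          simp only [Set.mem_iInter, Set.mem_Ici]
          constructor
          · intro hx
            have htd : Tendsto (fun n : ℕ => a - a / ((n : ℝ) + 2)) atTop (nhds a) := by
              have h1 : Tendsto (fun n : ℕ => a / ((n : ℝ) + 2)) atTop (nhds 0) :=
                Tendsto.div_atTop tendsto_const_nhds
                  (tendsto_atTop_add_const_right _ 2 tendsto_natCast_atTop_atTop)
              simpa using tendsto_const_nhds.sub h1
            exact le_of_tendsto htd (Filter.Eventually.of_forall hx)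
          · intro hx n
            have h2 : (0:ℝ) < (n:ℝ) + 2 := by positivity
            have : 0 < a / ((n:ℝ) + 2) := by positivity
            linarith
        rw [hI] at h
        exact h
      · -- finiteness at n = 0
        have h2 : (0:ℝ) < a - a / ((0:ℕ) + 2 : ℝ) := by
          norm_num
          linarith
        exact ((hloc _ h2).trans_le le_rfl).ne
    refine ge_of_tendsto htend (Filter.Eventually.of_forall fun n => key _ ?_)
    have h2 : (0:ℝ) < (n:ℝ) + 2 := by positivity
    have : 0 < a / ((n:ℝ) + 2) := by positivity
    linarith
  · intro h
    exact le_csSup hbdd ⟨ha.le, h⟩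

lemma Finv_preimage (μ : Measure ℝ) (hloc : ∀ x : ℝ, 0 < x → μ (Set.Ici x) < ⊤)
    {a : ℝ} (ha : 0 < a) :
    {m : ℝ | a ≤ Finv μ m} = Set.Ioc 0 (μ (Set.Ici a)).toReal := by
  ext m
  simp only [Set.mem_setOf_eq, Set.mem_Ioc]
  constructor
  · intro h
    have hm : 0 < m := by
      by_contra hcon
      push_neg at hcon
      rw [Finv_of_nonpos μ hcon] at h
      linarith
    refine ⟨hm, ?_⟩
    have := (Finv_ge_iff μ hloc ha hm).mp h
    exact (ENNReal.ofReal_le_iff_le_toReal (hloc a ha).ne).mp this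
  · rintro ⟨hm, hle⟩
    exact (Finv_ge_iff μ hloc ha hm).mpr
      ((ENNReal.ofReal_le_iff_le_toReal (hloc a ha).ne).mpr hle)

lemma measurable_Finv (μ : Measure ℝ) (hloc : ∀ x : ℝ, 0 < x → μ (Set.Ici x) < ⊤) :
    Measurable (Finv μ) := by
  apply measurable_of_Ici
  intro a
  rcases le_or_gt a 0 with h | h
  · have : Finv μ ⁻¹' Set.Ici a = Set.univ :=
      Set.eq_univ_of_forall fun m => h.trans (Finv_nonneg μ m)
    rw [this]; exact MeasurableSet.univ
  · have : Finv μ ⁻¹' Set.Ici a = Set.Ioc 0 (μ (Set.Ici a)).toReal :=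
      Finv_preimage μ hloc h
    rw [this]; exact measurableSet_Ioc

/-- Let `μ, ν` be nonnegative Borel measures on `(0,∞)` with `μ([x,∞)) < ∞` and
`ν([x,∞)) < ∞` for all `x > 0`, and let `γ_mon = (F_μ⁻¹, F_ν⁻¹) # L¹([0,∞))` be the
monotone coupling, the pushforward of Lebesgue measure on `[0,∞)` under the pair of
generalized inverses.  Then for all `a, b > 0`,
`γ_mon([a,∞) × [b,∞)) = min(F_μ(a), F_ν(b))`. -/
theorem stmt6 (μ ν : Measure ℝ)
    (hμsupp : μ (Set.Iic 0) = 0) (hνsupp : ν (Set.Iic 0) = 0)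
    (hμloc : ∀ x : ℝ, 0 < x → μ (Set.Ici x) < ⊤)
    (hνloc : ∀ x : ℝ, 0 < x → ν (Set.Ici x) < ⊤)
    (a b : ℝ) (ha : 0 < a) (hb : 0 < b) :
    Measure.map (fun m : ℝ => (Finv μ m, Finv ν m)) (volume.restrict (Set.Ici (0 : ℝ)))
        (Set.Ici a ×ˢ Set.Ici b) = min (μ (Set.Ici a)) (ν (Set.Ici b)) := by
  set c := (μ (Set.Ici a)).toReal with hc
  set d := (ν (Set.Ici b)).toReal with hd
  have hf : Measurable (fun m : ℝ => (Finv μ m, Finv ν m)) :=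
    (measurable_Finv μ hμloc).prodMk (measurable_Finv ν hνloc)
  rw [Measure.map_apply hf (measurableSet_Ici.prod measurableSet_Ici)]
  have hpre : (fun m : ℝ => (Finv μ m, Finv ν m)) ⁻¹' (Set.Ici a ×ˢ Set.Ici b)
      = Set.Ioc 0 (min c d) := by
    have : (fun m : ℝ => (Finv μ m, Finv ν m)) ⁻¹' (Set.Ici a ×ˢ Set.Ici b)
        = {m : ℝ | a ≤ Finv μ m} ∩ {m : ℝ | b ≤ Finv ν m} := by
      ext m; simp [Set.mem_prod]
    rw [this, Finv_preimage μ hμloc ha, Finv_preimage ν hνloc hb, Set.Ioc_inter_Ioc,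
      max_self]
  rw [hpre, Measure.restrict_apply measurableSet_Ioc]
  have hsub : Set.Ioc 0 (min c d) ∩ Set.Ici 0 = Set.Ioc 0 (min c d) :=
    Set.inter_eq_left.mpr (Set.Ioc_subset_Ioi_self.trans Set.Ioi_subset_Ici_self)
  rw [hsub, Real.volume_Ioc, sub_zero]
  rcases le_total c d with hcd | hcd
  · rw [min_eq_left hcd, hc, ENNReal.ofReal_toReal (hμloc a ha).ne, min_eq_left]
    rw [← ENNReal.ofReal_toReal (hμloc a ha).ne, ← ENNReal.ofReal_toReal (hνloc b hb).ne]
    exact ENNReal.ofReal_le_ofReal hcd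
  · rw [min_eq_right hcd, hd, ENNReal.ofReal_toReal (hνloc b hb).ne, min_eq_right]
    rw [← ENNReal.ofReal_toReal (hμloc a ha).ne, ← ENNReal.ofReal_toReal (hνloc b hb).ne]
    exact ENNReal.ofReal_le_ofReal hcd
end

section
/- For p = 1, the Sliced Figalli–Gigli distance satisfies SFG₁(μ, ν) ≤ 3 · FG₁(μ, ν) for all persistence measures μ, ν ∈ M¹(Ω). -/
open MeasureTheory

/-- The open half-plane `Ω = {(b,d) : b < d}`. -/
def Omega : Set (ℝ × ℝ) := {z | z.1 < z.2}

/-- Admissible transport plans between two measures on `Ω`: Radon measures on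
`Ω̄ × Ω̄` whose marginals restricted to Borel subsets of `Ω` are `μ` and `ν`
(mass may go to and from the diagonal freely). -/
def Adm (μ ν : Measure (ℝ × ℝ)) : Set (Measure ((ℝ × ℝ) × (ℝ × ℝ))) :=
  {γ | (∀ A : Set (ℝ × ℝ), MeasurableSet A → A ⊆ Omega → γ (A ×ˢ Set.univ) = μ A) ∧
       (∀ B : Set (ℝ × ℝ), MeasurableSet B → B ⊆ Omega → γ (Set.univ ×ˢ B) = ν B) ∧
       γ {w : (ℝ × ℝ) × (ℝ × ℝ) | ¬ w.1.1 ≤ w.1.2 ∨ ¬ w.2.1 ≤ w.2.2} = 0}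

/-- The transport cost `∬ d(x,y)^p dγ(x,y)` (Euclidean ground distance). -/
noncomputable def FGcost (p : ℝ) (γ : Measure ((ℝ × ℝ) × (ℝ × ℝ))) : ENNReal :=
  ∫⁻ w, ENNReal.ofReal
    ((Real.sqrt ((w.1.1 - w.2.1) ^ 2 + (w.1.2 - w.2.2) ^ 2)) ^ p) ∂γ

/-- The Figalli–Gigli distance `FG_p(μ,ν) = (inf_{γ ∈ Adm(μ,ν)} ∬ d(x,y)^p dγ)^{1/p}`. -/
noncomputable def FG (p : ℝ) (μ ν : Measure (ℝ × ℝ)) : ENNReal :=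
  (⨅ γ ∈ Adm μ ν, FGcost p γ) ^ (1 / p)

/-- Projection onto the geodesic `G_t`: points of the strip `z1 ≤ t ≤ z2` project
orthogonally onto the line through `(t,t)` with direction `(−1,1)`, all other points
project onto the diagonal (here onto the diagonal point `(t,t)`). -/
noncomputable def projGeo (t : ℝ) (z : ℝ × ℝ) : ℝ × ℝ :=
  if z.1 ≤ t ∧ t ≤ z.2 then (t - (z.2 - z.1) / 2, t + (z.2 - z.1) / 2) else (t, t)

/-- The normalization `dμ̃(z) = dμ(z)/d(z,Δ)`, with `d(z,Δ) = (z2−z1)/√2`. -/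
noncomputable def normalizePM (μ : Measure (ℝ × ℝ)) : Measure (ℝ × ℝ) :=
  μ.withDensity fun z => ENNReal.ofReal (Real.sqrt 2 / (z.2 - z.1))

noncomputable def wdens (z : ℝ × ℝ) : ENNReal := ENNReal.ofReal (Real.sqrt 2 / (z.2 - z.1))
noncomputable def sKer (t : ℝ) (z : ℝ × ℝ) : ENNReal :=
  if z.1 ≤ t ∧ t ≤ z.2 then wdens z else 0
noncomputable def cost1 (u v : ℝ × ℝ) : ENNReal :=
  ENNReal.ofReal (Real.sqrt ((u.1 - v.1) ^ 2 + (u.2 - v.2) ^ 2))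
noncomputable def Ffun (t : ℝ) (w : (ℝ × ℝ) × (ℝ × ℝ)) : ENNReal :=
  min (sKer t w.1) (sKer t w.2) * cost1 (projGeo t w.1) (projGeo t w.2)
  + (sKer t w.1 - min (sKer t w.1) (sKer t w.2)) * cost1 (projGeo t w.1) (t, t)
  + (sKer t w.2 - min (sKer t w.1) (sKer t w.2)) * cost1 (t, t) (projGeo t w.2)
lemma measurable_wdens : Measurable wdens := by unfold wdens; fun_prop
lemma measurable_projGeo2 : Measurable (fun p : ℝ × (ℝ × ℝ) => projGeo p.1 p.2) := by
  unfold projGeo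
  apply Measurable.ite
  · exact (measurableSet_le (measurable_snd.fst) measurable_fst).inter
      (measurableSet_le measurable_fst (measurable_snd.snd))
  · fun_prop
  · fun_prop
lemma measurable_sKer2 : Measurable (fun p : ℝ × (ℝ × ℝ) => sKer p.1 p.2) := by
  unfold sKer
  apply Measurable.ite
  · exact (measurableSet_le (measurable_snd.fst) measurable_fst).inter
      (measurableSet_le measurable_fst (measurable_snd.snd))
  · exact measurable_wdens.comp measurable_snd
  · fun_prop
lemma measurable_cost1 : Measurable (fun w : (ℝ × ℝ) × (ℝ × ℝ) => cost1 w.1 w.2) := by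
  unfold cost1; fun_prop
lemma measurable_Ffun2 : Measurable (fun p : ℝ × ((ℝ × ℝ) × (ℝ × ℝ)) => Ffun p.1 p.2) := by
  have hs1 : Measurable (fun p : ℝ × ((ℝ × ℝ) × (ℝ × ℝ)) => sKer p.1 p.2.1) :=
    measurable_sKer2.comp (measurable_fst.prodMk (measurable_snd.fst))
  have hs2 : Measurable (fun p : ℝ × ((ℝ × ℝ) × (ℝ × ℝ)) => sKer p.1 p.2.2) :=
    measurable_sKer2.comp (measurable_fst.prodMk (measurable_snd.snd))
  have hp1 : Measurable (fun p : ℝ × ((ℝ × ℝ) × (ℝ × ℝ)) => projGeo p.1 p.2.1) :=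
    measurable_projGeo2.comp (measurable_fst.prodMk (measurable_snd.fst))
  have hp2 : Measurable (fun p : ℝ × ((ℝ × ℝ) × (ℝ × ℝ)) => projGeo p.1 p.2.2) :=
    measurable_projGeo2.comp (measurable_fst.prodMk (measurable_snd.snd))
  have hc0 : Measurable (fun p : ℝ × ((ℝ × ℝ) × (ℝ × ℝ)) =>
      cost1 (projGeo p.1 p.2.1) (projGeo p.1 p.2.2)) := by
    have h := measurable_cost1.comp (hp1.prodMk hp2); exact h
  have hc1 : Measurable (fun p : ℝ × ((ℝ × ℝ) × (ℝ × ℝ)) =>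
      cost1 (projGeo p.1 p.2.1) (p.1, p.1)) := by
    have h := measurable_cost1.comp (hp1.prodMk (measurable_fst.prodMk measurable_fst)); exact h
  have hc2 : Measurable (fun p : ℝ × ((ℝ × ℝ) × (ℝ × ℝ)) =>
      cost1 (p.1, p.1) (projGeo p.1 p.2.2)) := by
    have h := measurable_cost1.comp ((measurable_fst.prodMk measurable_fst).prodMk hp2); exact h
  unfold Ffun
  exact (((hs1.min hs2).mul hc0).add (((hs1.sub (hs1.min hs2)).mul hc1))).add
    ((hs2.sub (hs1.min hs2)).mul hc2)

lemma measurableSet_Omega : MeasurableSet Omega :=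
  (isOpen_lt continuous_fst continuous_snd).measurableSet

lemma measurable_projGeo (t : ℝ) : Measurable (projGeo t) :=
  measurable_projGeo2.comp (measurable_const.prodMk measurable_id)

lemma measurable_sKer (t : ℝ) : Measurable (sKer t) :=
  measurable_sKer2.comp (measurable_const.prodMk measurable_id)

lemma FGcost_one (γ : Measure ((ℝ × ℝ) × (ℝ × ℝ))) :
    FGcost 1 γ = ∫⁻ w, cost1 w.1 w.2 ∂γ := by
  unfold FGcost cost1
  simp [Real.rpow_one]

lemma FG_one (μ ν : Measure (ℝ × ℝ)) :
    FG 1 μ ν = ⨅ γ ∈ Adm μ ν, FGcost 1 γ := by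
  unfold FG
  norm_num

lemma wdens_eq_zero {z : ℝ × ℝ} (h : z.2 ≤ z.1) : wdens z = 0 := by
  unfold wdens
  rw [ENNReal.ofReal_eq_zero]
  rcases eq_or_lt_of_le h with h' | h'
  · rw [h', sub_self, div_zero]
  · exact le_of_lt (div_neg_of_pos_of_neg (by positivity) (by linarith))

lemma sKer_eq_zero_of_not_mem {t : ℝ} {z : ℝ × ℝ} (h : ¬ (z.1 ≤ t ∧ t ≤ z.2)) :
    sKer t z = 0 := by
  unfold sKer; rw [if_neg h]

lemma sKer_eq_wdens {t : ℝ} {z : ℝ × ℝ} (h : z.1 ≤ t ∧ t ≤ z.2) :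
    sKer t z = wdens z := by
  unfold sKer; rw [if_pos h]

/-- Key marginal identity. -/
lemma lintegral_fst_marginal {γ : Measure ((ℝ × ℝ) × (ℝ × ℝ))} {μ : Measure (ℝ × ℝ)}
    (h : ∀ A : Set (ℝ × ℝ), MeasurableSet A → A ⊆ Omega → γ (A ×ˢ Set.univ) = μ A)
    {g : ℝ × ℝ → ENNReal} (hg : Measurable g) (hg0 : ∀ z, z ∉ Omega → g z = 0) :
    ∫⁻ w, g w.1 ∂γ = ∫⁻ z, g z ∂μ := by
  have hres : (γ.map Prod.fst).restrict Omega = μ.restrict Omega := by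
    ext s hs
    rw [Measure.restrict_apply hs, Measure.restrict_apply hs,
      Measure.map_apply measurable_fst (hs.inter measurableSet_Omega)]
    rw [← h (s ∩ Omega) (hs.inter measurableSet_Omega) Set.inter_subset_right]
    congr 1
    ext w
    simp [Set.mem_prod]
  have hind : ∀ (ρ : Measure (ℝ × ℝ)), ∫⁻ z, g z ∂ρ = ∫⁻ z, g z ∂(ρ.restrict Omega) := by
    intro ρ
    rw [← lintegral_indicator measurableSet_Omega]
    congr 1
    ext z
    by_cases hz : z ∈ Omega
    · simp [hz]
    · simp [hz, hg0 z hz]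
  calc ∫⁻ w, g w.1 ∂γ = ∫⁻ z, g z ∂(γ.map Prod.fst) :=
        (lintegral_map hg measurable_fst).symm
    _ = ∫⁻ z, g z ∂((γ.map Prod.fst).restrict Omega) := hind _
    _ = ∫⁻ z, g z ∂(μ.restrict Omega) := by rw [hres]
    _ = ∫⁻ z, g z ∂μ := (hind μ).symm

lemma lintegral_snd_marginal {γ : Measure ((ℝ × ℝ) × (ℝ × ℝ))} {ν : Measure (ℝ × ℝ)}
    (h : ∀ B : Set (ℝ × ℝ), MeasurableSet B → B ⊆ Omega → γ (Set.univ ×ˢ B) = ν B)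
    {g : ℝ × ℝ → ENNReal} (hg : Measurable g) (hg0 : ∀ z, z ∉ Omega → g z = 0) :
    ∫⁻ w, g w.2 ∂γ = ∫⁻ z, g z ∂ν := by
  have hres : (γ.map Prod.snd).restrict Omega = ν.restrict Omega := by
    ext s hs
    rw [Measure.restrict_apply hs, Measure.restrict_apply hs,
      Measure.map_apply measurable_snd (hs.inter measurableSet_Omega)]
    rw [← h (s ∩ Omega) (hs.inter measurableSet_Omega) Set.inter_subset_right]
    congr 1
    ext w
    simp [Set.mem_prod]
  have hind : ∀ (ρ : Measure (ℝ × ℝ)), ∫⁻ z, g z ∂ρ = ∫⁻ z, g z ∂(ρ.restrict Omega) := by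
    intro ρ
    rw [← lintegral_indicator measurableSet_Omega]
    congr 1
    ext z
    by_cases hz : z ∈ Omega
    · simp [hz]
    · simp [hz, hg0 z hz]
  calc ∫⁻ w, g w.2 ∂γ = ∫⁻ z, g z ∂(γ.map Prod.snd) :=
        (lintegral_map hg measurable_snd).symm
    _ = ∫⁻ z, g z ∂((γ.map Prod.snd).restrict Omega) := hind _
    _ = ∫⁻ z, g z ∂(ν.restrict Omega) := by rw [hres]
    _ = ∫⁻ z, g z ∂ν := (hind ν).symm

/-! ### The sliced transport plan -/

noncomputable def planT (t : ℝ) (γ : Measure ((ℝ × ℝ) × (ℝ × ℝ))) :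
    Measure ((ℝ × ℝ) × (ℝ × ℝ)) :=
  Measure.map (fun w => (projGeo t w.1, projGeo t w.2))
      (γ.withDensity (fun w => min (sKer t w.1) (sKer t w.2)))
  + Measure.map (fun w => (projGeo t w.1, (t, t)))
      (γ.withDensity (fun w => sKer t w.1 - min (sKer t w.1) (sKer t w.2)))
  + Measure.map (fun w => ((t, t), projGeo t w.2))
      (γ.withDensity (fun w => sKer t w.2 - min (sKer t w.1) (sKer t w.2)))

lemma measurable_m0 (t : ℝ) : Measurable (fun w : (ℝ × ℝ) × (ℝ × ℝ) =>
    min (sKer t w.1) (sKer t w.2)) :=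
  ((measurable_sKer t).comp measurable_fst).min ((measurable_sKer t).comp measurable_snd)

lemma measurable_m1 (t : ℝ) : Measurable (fun w : (ℝ × ℝ) × (ℝ × ℝ) =>
    sKer t w.1 - min (sKer t w.1) (sKer t w.2)) :=
  ((measurable_sKer t).comp measurable_fst).sub (measurable_m0 t)

lemma measurable_m2 (t : ℝ) : Measurable (fun w : (ℝ × ℝ) × (ℝ × ℝ) =>
    sKer t w.2 - min (sKer t w.1) (sKer t w.2)) :=
  ((measurable_sKer t).comp measurable_snd).sub (measurable_m0 t)

lemma measurable_map0 (t : ℝ) : Measurable (fun w : (ℝ × ℝ) × (ℝ × ℝ) =>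
    (projGeo t w.1, projGeo t w.2)) :=
  ((measurable_projGeo t).comp measurable_fst).prodMk ((measurable_projGeo t).comp measurable_snd)

lemma measurable_map1 (t : ℝ) : Measurable (fun w : (ℝ × ℝ) × (ℝ × ℝ) =>
    (projGeo t w.1, ((t : ℝ), (t : ℝ)))) :=
  ((measurable_projGeo t).comp measurable_fst).prodMk measurable_const

lemma measurable_map2 (t : ℝ) : Measurable (fun w : (ℝ × ℝ) × (ℝ × ℝ) =>
    (((t : ℝ), (t : ℝ)), projGeo t w.2)) :=
  measurable_const.prodMk ((measurable_projGeo t).comp measurable_snd)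

lemma measurable_c0 (t : ℝ) : Measurable (fun w : (ℝ × ℝ) × (ℝ × ℝ) =>
    cost1 (projGeo t w.1) (projGeo t w.2)) := by
  have h := measurable_cost1.comp (measurable_map0 t); exact h

lemma measurable_c1 (t : ℝ) : Measurable (fun w : (ℝ × ℝ) × (ℝ × ℝ) =>
    cost1 (projGeo t w.1) ((t : ℝ), (t : ℝ))) := by
  have h := measurable_cost1.comp (measurable_map1 t); exact h

lemma measurable_c2 (t : ℝ) : Measurable (fun w : (ℝ × ℝ) × (ℝ × ℝ) =>
    cost1 (((t : ℝ), (t : ℝ))) (projGeo t w.2)) := by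
  have h := measurable_cost1.comp (measurable_map2 t); exact h

lemma planT_cost (t : ℝ) (γ : Measure ((ℝ × ℝ) × (ℝ × ℝ))) :
    FGcost 1 (planT t γ) = ∫⁻ w, Ffun t w ∂γ := by
  rw [FGcost_one]
  unfold planT
  rw [lintegral_add_measure, lintegral_add_measure]
  rw [lintegral_map measurable_cost1 (measurable_map0 t),
      lintegral_map measurable_cost1 (measurable_map1 t),
      lintegral_map measurable_cost1 (measurable_map2 t)]
  rw [lintegral_withDensity_eq_lintegral_mul _ (measurable_m0 t)
        (by have h := measurable_cost1.comp ((measurable_map0 t)); exact h),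
      lintegral_withDensity_eq_lintegral_mul _ (measurable_m1 t)
        (by have h := measurable_cost1.comp ((measurable_map1 t)); exact h),
      lintegral_withDensity_eq_lintegral_mul _ (measurable_m2 t)
        (by have h := measurable_cost1.comp ((measurable_map2 t)); exact h)]
  symm
  unfold Ffun
  rw [lintegral_add_right _ (show Measurable (fun w : (ℝ × ℝ) × (ℝ × ℝ) =>
        (sKer t w.2 - min (sKer t w.1) (sKer t w.2)) * cost1 (t, t) (projGeo t w.2)) from
        (measurable_m2 t).mul (measurable_c2 t)),
      lintegral_add_left (show Measurable (fun w : (ℝ × ℝ) × (ℝ × ℝ) =>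
        min (sKer t w.1) (sKer t w.2) * cost1 (projGeo t w.1) (projGeo t w.2)) from
        (measurable_m0 t).mul (measurable_c0 t))]
  rfl

lemma normalizePM_eq (μ : Measure (ℝ × ℝ)) : normalizePM μ = μ.withDensity wdens := rfl

lemma projGeo_fst_le_snd (t : ℝ) (z : ℝ × ℝ) : (projGeo t z).1 ≤ (projGeo t z).2 := by
  unfold projGeo
  split_ifs with h
  · show t - (z.2 - z.1) / 2 ≤ t + (z.2 - z.1) / 2
    have : z.1 ≤ z.2 := le_trans h.1 h.2
    linarith
  · exact le_refl t

lemma diag_not_mem_Omega (t : ℝ) : ((t, t) : ℝ × ℝ) ∉ Omega := by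
  simp [Omega]

lemma mem_strip_of_proj_mem_Omega {t : ℝ} {z : ℝ × ℝ} (h : projGeo t z ∈ Omega) :
    z.1 ≤ t ∧ t ≤ z.2 := by
  by_contra hc
  rw [projGeo, if_neg hc] at h
  exact diag_not_mem_Omega t h

lemma sKer_vanish {t : ℝ} {z : ℝ × ℝ} (h : z ∉ Omega) : sKer t z = 0 := by
  unfold sKer
  split_ifs with h'
  · exact wdens_eq_zero (by simpa [Omega, not_lt] using h)
  · rfl

lemma planT_mem {μ ν : Measure (ℝ × ℝ)} {γ : Measure ((ℝ × ℝ) × (ℝ × ℝ))}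
    (hγ : γ ∈ Adm μ ν) (t : ℝ) :
    planT t γ ∈ Adm (Measure.map (projGeo t) (normalizePM μ))
      (Measure.map (projGeo t) (normalizePM ν)) := by
  obtain ⟨h1, h2, h3⟩ := hγ
  refine ⟨?_, ?_, ?_⟩
  · -- first marginal
    intro A hA hAΩ
    have hpre : MeasurableSet (projGeo t ⁻¹' A) := (measurable_projGeo t) hA
    have hSm : MeasurableSet {w : (ℝ × ℝ) × (ℝ × ℝ) | projGeo t w.1 ∈ A} :=
      ((measurable_projGeo t).comp measurable_fst) hA
    have hAU : MeasurableSet (A ×ˢ (Set.univ : Set (ℝ × ℝ))) := hA.prod MeasurableSet.univ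
    have hs0 : (fun w : (ℝ × ℝ) × (ℝ × ℝ) => (projGeo t w.1, projGeo t w.2)) ⁻¹'
        (A ×ˢ Set.univ) = {w | projGeo t w.1 ∈ A} := by
      ext w; simp [Set.mem_prod]
    have hs1 : (fun w : (ℝ × ℝ) × (ℝ × ℝ) => (projGeo t w.1, ((t:ℝ), (t:ℝ)))) ⁻¹'
        (A ×ˢ Set.univ) = {w | projGeo t w.1 ∈ A} := by
      ext w; simp [Set.mem_prod]
    have hs2 : (fun w : (ℝ × ℝ) × (ℝ × ℝ) => (((t:ℝ), (t:ℝ)), projGeo t w.2)) ⁻¹'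
        (A ×ˢ Set.univ) = ∅ := by
      ext w
      simp only [Set.mem_preimage, Set.mem_prod, Set.mem_empty_iff_false, iff_false, not_and]
      intro hmem
      exact absurd (hAΩ hmem) (diag_not_mem_Omega t)
    set g : ℝ × ℝ → ENNReal := (projGeo t ⁻¹' A).indicator (sKer t) with hg
    have hgmeas : Measurable g := (measurable_sKer t).indicator hpre
    have hg0 : ∀ z, z ∉ Omega → g z = 0 := by
      intro z hz
      rw [hg]
      by_cases hzA : z ∈ projGeo t ⁻¹' A
      · rw [Set.indicator_of_mem hzA]; exact sKer_vanish hz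
      · exact Set.indicator_of_notMem hzA _
    unfold planT
    rw [Measure.add_apply, Measure.add_apply,
      Measure.map_apply (measurable_map0 t) hAU,
      Measure.map_apply (measurable_map1 t) hAU,
      Measure.map_apply (measurable_map2 t) hAU,
      hs0, hs1, hs2, measure_empty, add_zero,
      withDensity_apply _ hSm, withDensity_apply _ hSm]
    have hsum : (∫⁻ w in {w : (ℝ × ℝ) × (ℝ × ℝ) | projGeo t w.1 ∈ A},
          min (sKer t w.1) (sKer t w.2) ∂γ)
        + (∫⁻ w in {w : (ℝ × ℝ) × (ℝ × ℝ) | projGeo t w.1 ∈ A},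
          sKer t w.1 - min (sKer t w.1) (sKer t w.2) ∂γ)
        = ∫⁻ w, g w.1 ∂γ := by
      rw [← lintegral_add_left (measurable_m0 t)]
      have : ∀ w : (ℝ × ℝ) × (ℝ × ℝ), min (sKer t w.1) (sKer t w.2)
          + (sKer t w.1 - min (sKer t w.1) (sKer t w.2)) = sKer t w.1 := fun w =>
        add_tsub_cancel_of_le (min_le_left _ _)
      rw [lintegral_congr this, ← lintegral_indicator hSm]
      congr 1
    rw [hsum, lintegral_fst_marginal h1 hgmeas hg0]
    rw [Measure.map_apply (measurable_projGeo t) hA, normalizePM_eq,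
      withDensity_apply _ hpre, ← lintegral_indicator hpre]
    apply lintegral_congr
    intro z
    rw [hg]
    by_cases hz : z ∈ projGeo t ⁻¹' A
    · rw [Set.indicator_of_mem hz, Set.indicator_of_mem hz]
      exact sKer_eq_wdens (mem_strip_of_proj_mem_Omega (hAΩ hz))
    · rw [Set.indicator_of_notMem hz, Set.indicator_of_notMem hz]
  · -- second marginal
    intro B hB hBΩ
    have hpre : MeasurableSet (projGeo t ⁻¹' B) := (measurable_projGeo t) hB
    have hSm : MeasurableSet {w : (ℝ × ℝ) × (ℝ × ℝ) | projGeo t w.2 ∈ B} :=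
      ((measurable_projGeo t).comp measurable_snd) hB
    have hBU : MeasurableSet ((Set.univ : Set (ℝ × ℝ)) ×ˢ B) := MeasurableSet.univ.prod hB
    have hs0 : (fun w : (ℝ × ℝ) × (ℝ × ℝ) => (projGeo t w.1, projGeo t w.2)) ⁻¹'
        (Set.univ ×ˢ B) = {w | projGeo t w.2 ∈ B} := by
      ext w; simp [Set.mem_prod]
    have hs2 : (fun w : (ℝ × ℝ) × (ℝ × ℝ) => (((t:ℝ), (t:ℝ)), projGeo t w.2)) ⁻¹'
        (Set.univ ×ˢ B) = {w | projGeo t w.2 ∈ B} := by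
      ext w; simp [Set.mem_prod]
    have hs1 : (fun w : (ℝ × ℝ) × (ℝ × ℝ) => (projGeo t w.1, ((t:ℝ), (t:ℝ)))) ⁻¹'
        (Set.univ ×ˢ B) = ∅ := by
      ext w
      simp only [Set.mem_preimage, Set.mem_prod, Set.mem_empty_iff_false, iff_false, not_and]
      intro _ hmem
      exact absurd (hBΩ hmem) (diag_not_mem_Omega t)
    set g : ℝ × ℝ → ENNReal := (projGeo t ⁻¹' B).indicator (sKer t) with hg
    have hgmeas : Measurable g := (measurable_sKer t).indicator hpre
    have hg0 : ∀ z, z ∉ Omega → g z = 0 := by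
      intro z hz
      rw [hg]
      by_cases hzB : z ∈ projGeo t ⁻¹' B
      · rw [Set.indicator_of_mem hzB]; exact sKer_vanish hz
      · exact Set.indicator_of_notMem hzB _
    unfold planT
    rw [Measure.add_apply, Measure.add_apply,
      Measure.map_apply (measurable_map0 t) hBU,
      Measure.map_apply (measurable_map1 t) hBU,
      Measure.map_apply (measurable_map2 t) hBU,
      hs0, hs1, hs2, measure_empty, add_zero,
      withDensity_apply _ hSm, withDensity_apply _ hSm]
    have hsum : (∫⁻ w in {w : (ℝ × ℝ) × (ℝ × ℝ) | projGeo t w.2 ∈ B},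
          min (sKer t w.1) (sKer t w.2) ∂γ)
        + (∫⁻ w in {w : (ℝ × ℝ) × (ℝ × ℝ) | projGeo t w.2 ∈ B},
          sKer t w.2 - min (sKer t w.1) (sKer t w.2) ∂γ)
        = ∫⁻ w, g w.2 ∂γ := by
      rw [← lintegral_add_left (measurable_m0 t)]
      have : ∀ w : (ℝ × ℝ) × (ℝ × ℝ), min (sKer t w.1) (sKer t w.2)
          + (sKer t w.2 - min (sKer t w.1) (sKer t w.2)) = sKer t w.2 := fun w =>
        add_tsub_cancel_of_le (min_le_right _ _)
      rw [lintegral_congr this, ← lintegral_indicator hSm]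
      congr 1
    rw [hsum, lintegral_snd_marginal h2 hgmeas hg0]
    rw [Measure.map_apply (measurable_projGeo t) hB, normalizePM_eq,
      withDensity_apply _ hpre, ← lintegral_indicator hpre]
    apply lintegral_congr
    intro z
    rw [hg]
    by_cases hz : z ∈ projGeo t ⁻¹' B
    · rw [Set.indicator_of_mem hz, Set.indicator_of_mem hz]
      exact sKer_eq_wdens (mem_strip_of_proj_mem_Omega (hBΩ hz))
    · rw [Set.indicator_of_notMem hz, Set.indicator_of_notMem hz]
  · -- concentrated on the closed half-planes
    have hBmeas : MeasurableSet {w : (ℝ × ℝ) × (ℝ × ℝ) | ¬ w.1.1 ≤ w.1.2 ∨ ¬ w.2.1 ≤ w.2.2} := by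
      rw [Set.setOf_or]
      exact ((measurableSet_le (measurable_fst.fst) (measurable_fst.snd)).compl).union
        ((measurableSet_le (measurable_snd.fst) (measurable_snd.snd)).compl)
    have hempty : ∀ (f g : (ℝ × ℝ) × (ℝ × ℝ) → ℝ × ℝ),
        (∀ w, (f w).1 ≤ (f w).2) → (∀ w, (g w).1 ≤ (g w).2) →
        (fun w => (f w, g w)) ⁻¹' {w : (ℝ × ℝ) × (ℝ × ℝ) | ¬ w.1.1 ≤ w.1.2 ∨ ¬ w.2.1 ≤ w.2.2}
          = ∅ := by
      intro f g hf hg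
      ext w
      simp only [Set.mem_preimage, Set.mem_setOf_eq, Set.mem_empty_iff_false, iff_false]
      push_neg
      exact ⟨hf w, hg w⟩
    unfold planT
    rw [Measure.add_apply, Measure.add_apply,
      Measure.map_apply (measurable_map0 t) hBmeas,
      Measure.map_apply (measurable_map1 t) hBmeas,
      Measure.map_apply (measurable_map2 t) hBmeas,
      hempty _ _ (fun w => projGeo_fst_le_snd t w.1) (fun w => projGeo_fst_le_snd t w.2),
      hempty _ _ (fun w => projGeo_fst_le_snd t w.1) (fun _ => le_refl t),
      hempty _ _ (fun _ => le_refl t) (fun w => projGeo_fst_le_snd t w.2)]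
    simp

/-! ### Pointwise cost computations -/

lemma sqrt_two_pos : (0:ℝ) < Real.sqrt 2 := Real.sqrt_pos.mpr (by norm_num)

lemma cost1_proj_diag {t : ℝ} {z : ℝ × ℝ} (h : z.1 ≤ t ∧ t ≤ z.2) :
    cost1 (projGeo t z) (t, t) = ENNReal.ofReal ((z.2 - z.1) / Real.sqrt 2) := by
  unfold cost1 projGeo
  rw [if_pos h]
  have h1 : (((t - (z.2 - z.1) / 2, t + (z.2 - z.1) / 2) : ℝ × ℝ).1 - ((t,t) : ℝ × ℝ).1) ^ 2
      + (((t - (z.2 - z.1) / 2, t + (z.2 - z.1) / 2) : ℝ × ℝ).2 - ((t,t) : ℝ × ℝ).2) ^ 2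
      = ((z.2 - z.1) / Real.sqrt 2) ^ 2 := by
    show (t - (z.2 - z.1) / 2 - t) ^ 2 + (t + (z.2 - z.1) / 2 - t) ^ 2 = _
    rw [div_pow, Real.sq_sqrt (by norm_num : (0:ℝ) ≤ 2)]
    ring
  rw [h1, Real.sqrt_sq (div_nonneg (by linarith [h.1, h.2]) (Real.sqrt_nonneg 2))]

lemma cost1_diag_proj {t : ℝ} {z : ℝ × ℝ} (h : z.1 ≤ t ∧ t ≤ z.2) :
    cost1 (t, t) (projGeo t z) = ENNReal.ofReal ((z.2 - z.1) / Real.sqrt 2) := by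
  unfold cost1 projGeo
  rw [if_pos h]
  have h1 : (((t,t) : ℝ × ℝ).1 - ((t - (z.2 - z.1) / 2, t + (z.2 - z.1) / 2) : ℝ × ℝ).1) ^ 2
      + (((t,t) : ℝ × ℝ).2 - ((t - (z.2 - z.1) / 2, t + (z.2 - z.1) / 2) : ℝ × ℝ).2) ^ 2
      = ((z.2 - z.1) / Real.sqrt 2) ^ 2 := by
    show (t - (t - (z.2 - z.1) / 2)) ^ 2 + (t - (t + (z.2 - z.1) / 2)) ^ 2 = _
    rw [div_pow, Real.sq_sqrt (by norm_num : (0:ℝ) ≤ 2)]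
    ring
  rw [h1, Real.sqrt_sq (div_nonneg (by linarith [h.1, h.2]) (Real.sqrt_nonneg 2))]

lemma cost1_proj_proj {t : ℝ} {x y : ℝ × ℝ} (hx : x.1 ≤ t ∧ t ≤ x.2) (hy : y.1 ≤ t ∧ t ≤ y.2) :
    cost1 (projGeo t x) (projGeo t y)
      = ENNReal.ofReal (|(x.2 - x.1) - (y.2 - y.1)| / Real.sqrt 2) := by
  unfold cost1 projGeo
  rw [if_pos hx, if_pos hy]
  have h1 : (((t - (x.2 - x.1) / 2, t + (x.2 - x.1) / 2) : ℝ × ℝ).1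
        - ((t - (y.2 - y.1) / 2, t + (y.2 - y.1) / 2) : ℝ × ℝ).1) ^ 2
      + (((t - (x.2 - x.1) / 2, t + (x.2 - x.1) / 2) : ℝ × ℝ).2
        - ((t - (y.2 - y.1) / 2, t + (y.2 - y.1) / 2) : ℝ × ℝ).2) ^ 2
      = (((x.2 - x.1) - (y.2 - y.1)) / Real.sqrt 2) ^ 2 := by
    show (t - (x.2 - x.1) / 2 - (t - (y.2 - y.1) / 2)) ^ 2
        + (t + (x.2 - x.1) / 2 - (t + (y.2 - y.1) / 2)) ^ 2 = _
    rw [div_pow, Real.sq_sqrt (by norm_num : (0:ℝ) ≤ 2)]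
    ring
  rw [h1, Real.sqrt_sq_eq_abs, abs_div, abs_of_pos sqrt_two_pos]

lemma sKer_strip {t : ℝ} {z : ℝ × ℝ} (h : z.1 ≤ t ∧ t ≤ z.2) :
    sKer t z = ENNReal.ofReal (Real.sqrt 2 / (z.2 - z.1)) := by
  rw [sKer_eq_wdens h]; rfl

/-! ### The dominating function and the pointwise bound -/

noncomputable def Gfun (x y : ℝ × ℝ) (t : ℝ) : ENNReal :=
  (Set.Icc (max x.1 y.1) (min x.2 y.2)).indicator
    (fun _ => ENNReal.ofReal
      (2 * |(x.2 - x.1) - (y.2 - y.1)| / max (x.2 - x.1) (y.2 - y.1))) t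
  + ((Set.Icc x.1 x.2) \ (Set.Icc y.1 y.2)).indicator (fun _ => 1) t
  + ((Set.Icc y.1 y.2) \ (Set.Icc x.1 x.2)).indicator (fun _ => 1) t

lemma real_one {p : ℝ} (hp : 0 ≤ p) : Real.sqrt 2 / p * (p / Real.sqrt 2) ≤ 1 := by
  rcases eq_or_lt_of_le hp with h | h
  · rw [← h]
    norm_num
  · have : Real.sqrt 2 / p * (p / Real.sqrt 2) = 1 := by
      field_simp
    rw [this]

lemma real_core {px py : ℝ} (hpx : 0 < px) (hpy : 0 < py) (hle : px ≤ py) :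
    Real.sqrt 2 / py * (|px - py| / Real.sqrt 2)
      + (Real.sqrt 2 / px - Real.sqrt 2 / py) * (px / Real.sqrt 2)
      ≤ 2 * |px - py| / max px py := by
  have habs : |px - py| = py - px := by rw [abs_of_nonpos (by linarith)]; ring
  have hmax : max px py = py := max_eq_right hle
  have hs2 : Real.sqrt 2 ≠ 0 := ne_of_gt sqrt_two_pos
  rw [habs, hmax]
  have e1 : Real.sqrt 2 / py * ((py - px) / Real.sqrt 2) = (py - px) / py := by
    field_simp
  have e2 : (Real.sqrt 2 / px - Real.sqrt 2 / py) * (px / Real.sqrt 2) = 1 - px / py := by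
    field_simp
  rw [e1, e2]
  have e3 : (py - px) / py + (1 - px / py) = 2 * (py - px) / py := by
    field_simp
    ring
  linarith [e3.le]

lemma real_deg {py : ℝ} (hpy : 0 ≤ py) :
    Real.sqrt 2 / py * (py / Real.sqrt 2) ≤ 2 * |0 - py| / max 0 py := by
  rcases eq_or_lt_of_le hpy with h | h
  · rw [← h]
    norm_num
  · calc Real.sqrt 2 / py * (py / Real.sqrt 2) ≤ 1 := real_one hpy
      _ ≤ 2 * |0 - py| / max 0 py := by
          rw [zero_sub, abs_neg, abs_of_pos h, max_eq_right hpy, mul_div_assoc,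
            div_self (ne_of_gt h)]
          norm_num

lemma Ffun_le_G {x y : ℝ × ℝ} (hx : x.1 ≤ x.2) (hy : y.1 ≤ y.2) (t : ℝ) :
    Ffun t (x, y) ≤ Gfun x y t := by
  have hpx0 : 0 ≤ x.2 - x.1 := by linarith
  have hpy0 : 0 ≤ y.2 - y.1 := by linarith
  by_cases hsx : x.1 ≤ t ∧ t ≤ x.2
  · by_cases hsy : y.1 ≤ t ∧ t ≤ y.2
    · -- both strips
      have ht1 : t ∈ Set.Icc (max x.1 y.1) (min x.2 y.2) := by
        rw [Set.mem_Icc, max_le_iff, le_min_iff]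
        exact ⟨⟨hsx.1, hsy.1⟩, hsx.2, hsy.2⟩
      have hG : ENNReal.ofReal
          (2 * |(x.2 - x.1) - (y.2 - y.1)| / max (x.2 - x.1) (y.2 - y.1)) ≤ Gfun x y t := by
        unfold Gfun
        rw [Set.indicator_of_mem ht1]
        exact le_trans le_self_add le_self_add
      refine le_trans ?_ hG
      show min (sKer t x) (sKer t y) * cost1 (projGeo t x) (projGeo t y)
          + (sKer t x - min (sKer t x) (sKer t y)) * cost1 (projGeo t x) (t, t)
          + (sKer t y - min (sKer t x) (sKer t y)) * cost1 (t, t) (projGeo t y) ≤ _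
      rcases eq_or_lt_of_le hpx0 with hpx1 | hpx1
      · -- x.2 - x.1 = 0
        have hx0 : sKer t x = 0 := by
          rw [sKer_strip hsx, ← hpx1, div_zero, ENNReal.ofReal_zero]
        rw [hx0, min_eq_left (zero_le : (0:ENNReal) ≤ _), tsub_self, zero_mul, zero_mul, tsub_zero,
          zero_add, zero_add, sKer_strip hsy, cost1_diag_proj hsy,
          ← ENNReal.ofReal_mul (by positivity)]
        apply ENNReal.ofReal_le_ofReal
        calc Real.sqrt 2 / (y.2 - y.1) * ((y.2 - y.1) / Real.sqrt 2)
            ≤ 2 * |0 - (y.2 - y.1)| / max 0 (y.2 - y.1) := real_deg hpy0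
          _ = 2 * |(x.2 - x.1) - (y.2 - y.1)| / max (x.2 - x.1) (y.2 - y.1) := by
              rw [← hpx1]
      · rcases eq_or_lt_of_le hpy0 with hpy1 | hpy1
        · -- y.2 - y.1 = 0
          have hy0 : sKer t y = 0 := by
            rw [sKer_strip hsy, ← hpy1, div_zero, ENNReal.ofReal_zero]
          rw [hy0, min_eq_right (zero_le : (0:ENNReal) ≤ _), tsub_self, zero_mul, zero_mul, tsub_zero,
            add_zero, zero_add, sKer_strip hsx, cost1_proj_diag hsx,
            ← ENNReal.ofReal_mul (by positivity)]
          apply ENNReal.ofReal_le_ofReal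
          calc Real.sqrt 2 / (x.2 - x.1) * ((x.2 - x.1) / Real.sqrt 2)
              ≤ 2 * |0 - (x.2 - x.1)| / max 0 (x.2 - x.1) := real_deg hpx0
            _ = 2 * |(x.2 - x.1) - (y.2 - y.1)| / max (x.2 - x.1) (y.2 - y.1) := by
                rw [← hpy1]
                rw [abs_sub_comm, max_comm]
        · -- both positive
          rcases le_total (x.2 - x.1) (y.2 - y.1) with hle | hle
          · have hmin : min (sKer t x) (sKer t y) = sKer t y := by
              apply min_eq_right
              rw [sKer_strip hsx, sKer_strip hsy]
              exact ENNReal.ofReal_le_ofReal (by gcongr)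
            have hsy0 : (0:ℝ) ≤ Real.sqrt 2 / (y.2 - y.1) :=
              div_nonneg (Real.sqrt_nonneg 2) hpy1.le
            have hsub0 : (0:ℝ) ≤ Real.sqrt 2 / (x.2 - x.1) - Real.sqrt 2 / (y.2 - y.1) := by
              rw [sub_nonneg]; gcongr
            rw [hmin, tsub_self, zero_mul, add_zero, sKer_strip hsx, sKer_strip hsy,
              cost1_proj_proj hsx hsy, cost1_proj_diag hsx,
              ← ENNReal.ofReal_sub _ hsy0,
              ← ENNReal.ofReal_mul hsy0,
              ← ENNReal.ofReal_mul hsub0,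
              ← ENNReal.ofReal_add (mul_nonneg hsy0 (div_nonneg (abs_nonneg _) (Real.sqrt_nonneg 2)))
                (mul_nonneg hsub0 (div_nonneg hpx1.le (Real.sqrt_nonneg 2)))]
            exact ENNReal.ofReal_le_ofReal (real_core hpx1 hpy1 hle)
          · have hmin : min (sKer t x) (sKer t y) = sKer t x := by
              apply min_eq_left
              rw [sKer_strip hsx, sKer_strip hsy]
              exact ENNReal.ofReal_le_ofReal (by gcongr)
            have hsx0 : (0:ℝ) ≤ Real.sqrt 2 / (x.2 - x.1) :=
              div_nonneg (Real.sqrt_nonneg 2) hpx1.le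
            have hsub0 : (0:ℝ) ≤ Real.sqrt 2 / (y.2 - y.1) - Real.sqrt 2 / (x.2 - x.1) := by
              rw [sub_nonneg]; gcongr
            rw [hmin, tsub_self, zero_mul, add_zero, sKer_strip hsx, sKer_strip hsy,
              cost1_proj_proj hsx hsy, cost1_diag_proj hsy,
              ← ENNReal.ofReal_sub _ hsx0,
              ← ENNReal.ofReal_mul hsx0,
              ← ENNReal.ofReal_mul hsub0,
              ← ENNReal.ofReal_add (mul_nonneg hsx0 (div_nonneg (abs_nonneg _) (Real.sqrt_nonneg 2)))
                (mul_nonneg hsub0 (div_nonneg hpy1.le (Real.sqrt_nonneg 2)))]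
            apply ENNReal.ofReal_le_ofReal
            rw [abs_sub_comm, max_comm]
            exact real_core hpy1 hpx1 hle
    · -- only x in strip
      have hy0 : sKer t y = 0 := sKer_eq_zero_of_not_mem hsy
      have hG : (1 : ENNReal) ≤ Gfun x y t := by
        unfold Gfun
        have ht2 : t ∈ (Set.Icc x.1 x.2) \ (Set.Icc y.1 y.2) := by
          constructor
          · exact Set.mem_Icc.mpr ⟨hsx.1, hsx.2⟩
          · rw [Set.mem_Icc]; exact hsy
        rw [Set.indicator_of_mem ht2]
        exact le_trans le_add_self le_self_add
      refine le_trans ?_ hG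
      show min (sKer t x) (sKer t y) * cost1 (projGeo t x) (projGeo t y)
          + (sKer t x - min (sKer t x) (sKer t y)) * cost1 (projGeo t x) (t, t)
          + (sKer t y - min (sKer t x) (sKer t y)) * cost1 (t, t) (projGeo t y) ≤ _
      rw [hy0, min_eq_right (zero_le : (0:ENNReal) ≤ _), tsub_self, zero_mul, zero_mul, tsub_zero,
        add_zero, zero_add, sKer_strip hsx, cost1_proj_diag hsx,
        ← ENNReal.ofReal_mul (by positivity), ← ENNReal.ofReal_one]
      exact ENNReal.ofReal_le_ofReal (real_one hpx0)
  · by_cases hsy : y.1 ≤ t ∧ t ≤ y.2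
    · -- only y in strip
      have hx0 : sKer t x = 0 := sKer_eq_zero_of_not_mem hsx
      have hG : (1 : ENNReal) ≤ Gfun x y t := by
        unfold Gfun
        have ht2 : t ∈ (Set.Icc y.1 y.2) \ (Set.Icc x.1 x.2) := by
          constructor
          · exact Set.mem_Icc.mpr ⟨hsy.1, hsy.2⟩
          · rw [Set.mem_Icc]; exact hsx
        rw [Set.indicator_of_mem ht2]
        exact le_add_self
      refine le_trans ?_ hG
      show min (sKer t x) (sKer t y) * cost1 (projGeo t x) (projGeo t y)
          + (sKer t x - min (sKer t x) (sKer t y)) * cost1 (projGeo t x) (t, t)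
          + (sKer t y - min (sKer t x) (sKer t y)) * cost1 (t, t) (projGeo t y) ≤ _
      rw [hx0, min_eq_left (zero_le : (0:ENNReal) ≤ _), tsub_self, zero_mul, zero_mul, tsub_zero,
        zero_add, zero_add, sKer_strip hsy, cost1_diag_proj hsy,
        ← ENNReal.ofReal_mul (by positivity), ← ENNReal.ofReal_one]
      exact ENNReal.ofReal_le_ofReal (real_one hpy0)
    · -- neither
      have hx0 : sKer t x = 0 := sKer_eq_zero_of_not_mem hsx
      have hy0 : sKer t y = 0 := sKer_eq_zero_of_not_mem hsy
      show min (sKer t x) (sKer t y) * cost1 (projGeo t x) (projGeo t y)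
          + (sKer t x - min (sKer t x) (sKer t y)) * cost1 (projGeo t x) (t, t)
          + (sKer t y - min (sKer t x) (sKer t y)) * cost1 (t, t) (projGeo t y) ≤ _
      rw [hx0, hy0]
      simp

lemma ofReal_pair (u v : ℝ) :
    ENNReal.ofReal (u - v) + ENNReal.ofReal (v - u) = ENNReal.ofReal |u - v| := by
  rcases le_total u v with h | h
  · rw [ENNReal.ofReal_of_nonpos (by linarith), zero_add, abs_sub_comm,
      abs_of_nonneg (by linarith)]
  · rw [show ENNReal.ofReal (v - u) = 0 from ENNReal.ofReal_of_nonpos (by linarith), add_zero,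
      abs_of_nonneg (by linarith)]

lemma volume_Icc_diff_le (a b c d : ℝ) :
    (volume ((Set.Icc a b) \ (Set.Icc c d)) : ENNReal)
      ≤ ENNReal.ofReal (c - a) + ENNReal.ofReal (b - d) := by
  have hsub : (Set.Icc a b) \ (Set.Icc c d) ⊆ (Set.Ico a c) ∪ (Set.Ioc d b) := by
    intro t ht
    obtain ⟨ht1, ht2⟩ := ht
    rw [Set.mem_Icc] at ht1
    rw [Set.mem_Icc] at ht2
    rcases not_and_or.mp ht2 with h | h
    · exact Or.inl (Set.mem_Ico.mpr ⟨ht1.1, not_le.mp h⟩)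
    · exact Or.inr (Set.mem_Ioc.mpr ⟨not_le.mp h, ht1.2⟩)
  calc volume ((Set.Icc a b) \ (Set.Icc c d)) ≤ volume ((Set.Ico a c) ∪ (Set.Ioc d b)) :=
        measure_mono hsub
    _ ≤ volume (Set.Ico a c) + volume (Set.Ioc d b) := measure_union_le _ _
    _ = ENNReal.ofReal (c - a) + ENNReal.ofReal (b - d) := by
        rw [Real.volume_Ico, Real.volume_Ioc]

lemma abs_sub_pers_le (x y : ℝ × ℝ) :
    |(x.2 - x.1) - (y.2 - y.1)| ≤ |x.1 - y.1| + |x.2 - y.2| := by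
  have h : (x.2 - x.1) - (y.2 - y.1) = (x.2 - y.2) - (x.1 - y.1) := by ring
  rw [h]
  calc |(x.2 - y.2) - (x.1 - y.1)| ≤ |x.2 - y.2| + |x.1 - y.1| := abs_sub _ _
    _ = |x.1 - y.1| + |x.2 - y.2| := by ring

lemma real_final (a b : ℝ) (ha : 0 ≤ a) (hb : 0 ≤ b) :
    a + b ≤ Real.sqrt 2 * Real.sqrt (a ^ 2 + b ^ 2) := by
  rw [← Real.sqrt_mul (by norm_num : (0:ℝ) ≤ 2)]
  calc a + b = Real.sqrt ((a + b) ^ 2) := (Real.sqrt_sq (by linarith)).symm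
    _ ≤ Real.sqrt (2 * (a ^ 2 + b ^ 2)) := Real.sqrt_le_sqrt (by nlinarith [sq_nonneg (a - b)])

lemma lintegral_G_le {x y : ℝ × ℝ} (hx : x.1 ≤ x.2) (hy : y.1 ≤ y.2) :
    ∫⁻ t, Gfun x y t ≤ ENNReal.ofReal (3 * Real.sqrt 2) * cost1 x y := by
  have hpx0 : 0 ≤ x.2 - x.1 := by linarith
  have hpy0 : 0 ≤ y.2 - y.1 := by linarith
  set δ := |(x.2 - x.1) - (y.2 - y.1)| with hδ
  have hδ0 : 0 ≤ δ := abs_nonneg _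
  have hmeas1 : MeasurableSet (Set.Icc (max x.1 y.1) (min x.2 y.2)) := measurableSet_Icc
  have hmeas2 : MeasurableSet ((Set.Icc x.1 x.2) \ (Set.Icc y.1 y.2)) :=
    measurableSet_Icc.diff measurableSet_Icc
  have hmeas3 : MeasurableSet ((Set.Icc y.1 y.2) \ (Set.Icc x.1 x.2)) :=
    measurableSet_Icc.diff measurableSet_Icc
  have hsplit : ∫⁻ t, Gfun x y t
      = ENNReal.ofReal (2 * δ / max (x.2 - x.1) (y.2 - y.1))
          * volume (Set.Icc (max x.1 y.1) (min x.2 y.2))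
        + volume ((Set.Icc x.1 x.2) \ (Set.Icc y.1 y.2))
        + volume ((Set.Icc y.1 y.2) \ (Set.Icc x.1 x.2)) := by
    unfold Gfun
    rw [lintegral_add_right _ ((measurable_const.indicator hmeas3)),
      lintegral_add_right _ ((measurable_const.indicator hmeas2)),
      lintegral_indicator_const hmeas1, lintegral_indicator_const hmeas2,
      lintegral_indicator_const hmeas3, one_mul, one_mul]
  rw [hsplit]
  have h1 : ENNReal.ofReal (2 * δ / max (x.2 - x.1) (y.2 - y.1))
      * volume (Set.Icc (max x.1 y.1) (min x.2 y.2)) ≤ ENNReal.ofReal (2 * δ) := by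
    rw [Real.volume_Icc]
    calc ENNReal.ofReal (2 * δ / max (x.2 - x.1) (y.2 - y.1))
          * ENNReal.ofReal (min x.2 y.2 - max x.1 y.1)
        ≤ ENNReal.ofReal (2 * δ / max (x.2 - x.1) (y.2 - y.1))
          * ENNReal.ofReal (min (x.2 - x.1) (y.2 - y.1)) := by
          apply mul_le_mul_right
          apply ENNReal.ofReal_le_ofReal
          rw [le_min_iff]
          constructor
          · have := le_max_left x.1 y.1
            have := min_le_left x.2 y.2
            linarith
          · have := le_max_right x.1 y.1
            have := min_le_right x.2 y.2
            linarith
      _ = ENNReal.ofReal (2 * δ / max (x.2 - x.1) (y.2 - y.1)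
            * min (x.2 - x.1) (y.2 - y.1)) := by
          rw [ENNReal.ofReal_mul (by positivity)]
      _ ≤ ENNReal.ofReal (2 * δ) := by
          apply ENNReal.ofReal_le_ofReal
          rcases eq_or_lt_of_le (le_max_of_le_left hpx0 :
              (0:ℝ) ≤ max (x.2 - x.1) (y.2 - y.1)) with hP | hP
          · rw [← hP, div_zero, zero_mul]
            positivity
          · calc 2 * δ / max (x.2 - x.1) (y.2 - y.1) * min (x.2 - x.1) (y.2 - y.1)
                ≤ 2 * δ / max (x.2 - x.1) (y.2 - y.1) * max (x.2 - x.1) (y.2 - y.1) := by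
                  apply mul_le_mul_of_nonneg_left (min_le_max) (by positivity)
              _ = 2 * δ := div_mul_cancel₀ _ (ne_of_gt hP)
  have h2 := volume_Icc_diff_le x.1 x.2 y.1 y.2
  have h3 := volume_Icc_diff_le y.1 y.2 x.1 x.2
  calc ENNReal.ofReal (2 * δ / max (x.2 - x.1) (y.2 - y.1))
        * volume (Set.Icc (max x.1 y.1) (min x.2 y.2))
      + volume ((Set.Icc x.1 x.2) \ (Set.Icc y.1 y.2))
      + volume ((Set.Icc y.1 y.2) \ (Set.Icc x.1 x.2))
      ≤ ENNReal.ofReal (2 * δ)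
        + (ENNReal.ofReal (y.1 - x.1) + ENNReal.ofReal (x.2 - y.2))
        + (ENNReal.ofReal (x.1 - y.1) + ENNReal.ofReal (y.2 - x.2)) :=
        add_le_add (add_le_add h1 h2) h3
    _ = ENNReal.ofReal (2 * δ)
        + (ENNReal.ofReal (y.1 - x.1) + ENNReal.ofReal (x.1 - y.1))
        + (ENNReal.ofReal (x.2 - y.2) + ENNReal.ofReal (y.2 - x.2)) := by ring
    _ = ENNReal.ofReal (2 * δ) + ENNReal.ofReal |y.1 - x.1| + ENNReal.ofReal |x.2 - y.2| := by
        rw [ofReal_pair, ofReal_pair]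
    _ = ENNReal.ofReal (2 * δ + |y.1 - x.1| + |x.2 - y.2|) := by
        rw [ENNReal.ofReal_add (by positivity) (abs_nonneg _),
          ENNReal.ofReal_add (by positivity) (abs_nonneg _)]
    _ ≤ ENNReal.ofReal (3 * Real.sqrt 2 * Real.sqrt ((x.1 - y.1) ^ 2 + (x.2 - y.2) ^ 2)) := by
        apply ENNReal.ofReal_le_ofReal
        have hd : δ ≤ |x.1 - y.1| + |x.2 - y.2| := abs_sub_pers_le x y
        have hf := real_final |x.1 - y.1| |x.2 - y.2| (abs_nonneg _) (abs_nonneg _)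
        rw [sq_abs, sq_abs] at hf
        rw [abs_sub_comm y.1 x.1]
        nlinarith [Real.sqrt_nonneg ((x.1 - y.1) ^ 2 + (x.2 - y.2) ^ 2), sqrt_two_pos]
    _ = ENNReal.ofReal (3 * Real.sqrt 2) * cost1 x y := by
        rw [ENNReal.ofReal_mul (by positivity)]
        rfl

lemma lintegral_Ffun_le {x y : ℝ × ℝ} (hx : x.1 ≤ x.2) (hy : y.1 ≤ y.2) :
    ∫⁻ t, Ffun t (x, y) ≤ ENNReal.ofReal (3 * Real.sqrt 2) * cost1 x y :=
  le_trans (lintegral_mono (fun t => Ffun_le_G hx hy t)) (lintegral_G_le hx hy)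

/-! ### A finite-cost admissible plan -/

noncomputable def diagPlan (μ ν : Measure (ℝ × ℝ)) : Measure ((ℝ × ℝ) × (ℝ × ℝ)) :=
  Measure.map (fun z : ℝ × ℝ => (z, (((z.1 + z.2) / 2 : ℝ), ((z.1 + z.2) / 2 : ℝ)))) μ
  + Measure.map (fun z : ℝ × ℝ => ((((z.1 + z.2) / 2 : ℝ), ((z.1 + z.2) / 2 : ℝ)), z)) ν

lemma measurable_diag1 : Measurable (fun z : ℝ × ℝ =>
    (z, (((z.1 + z.2) / 2 : ℝ), ((z.1 + z.2) / 2 : ℝ)))) := by fun_prop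

lemma measurable_diag2 : Measurable (fun z : ℝ × ℝ =>
    ((((z.1 + z.2) / 2 : ℝ), ((z.1 + z.2) / 2 : ℝ)), z)) := by fun_prop

lemma measurableSet_bad : MeasurableSet
    {w : (ℝ × ℝ) × (ℝ × ℝ) | ¬ w.1.1 ≤ w.1.2 ∨ ¬ w.2.1 ≤ w.2.2} := by
  rw [Set.setOf_or]
  exact ((measurableSet_le (measurable_fst.fst) (measurable_fst.snd)).compl).union
    ((measurableSet_le (measurable_snd.fst) (measurable_snd.snd)).compl)

lemma diagPlan_mem {μ ν : Measure (ℝ × ℝ)}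
    (hμΩ : μ {z : ℝ × ℝ | ¬ z.1 < z.2} = 0) (hνΩ : ν {z : ℝ × ℝ | ¬ z.1 < z.2} = 0) :
    diagPlan μ ν ∈ Adm μ ν := by
  refine ⟨?_, ?_, ?_⟩
  · intro A hA hAΩ
    have hAU : MeasurableSet (A ×ˢ (Set.univ : Set (ℝ × ℝ))) := hA.prod MeasurableSet.univ
    unfold diagPlan
    rw [Measure.add_apply, Measure.map_apply measurable_diag1 hAU,
      Measure.map_apply measurable_diag2 hAU]
    have e1 : (fun z : ℝ × ℝ => (z, (((z.1 + z.2) / 2 : ℝ), ((z.1 + z.2) / 2 : ℝ)))) ⁻¹'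
        (A ×ˢ Set.univ) = A := by
      ext z; simp [Set.mem_prod]
    have e2 : (fun z : ℝ × ℝ => ((((z.1 + z.2) / 2 : ℝ), ((z.1 + z.2) / 2 : ℝ)), z)) ⁻¹'
        (A ×ˢ Set.univ) = ∅ := by
      ext z
      simp only [Set.mem_preimage, Set.mem_prod, Set.mem_empty_iff_false, iff_false, not_and]
      intro hmem
      exact absurd (hAΩ hmem) (diag_not_mem_Omega _)
    rw [e1, e2, measure_empty, add_zero]
  · intro B hB hBΩ
    have hBU : MeasurableSet ((Set.univ : Set (ℝ × ℝ)) ×ˢ B) := MeasurableSet.univ.prod hB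
    unfold diagPlan
    rw [Measure.add_apply, Measure.map_apply measurable_diag1 hBU,
      Measure.map_apply measurable_diag2 hBU]
    have e1 : (fun z : ℝ × ℝ => (z, (((z.1 + z.2) / 2 : ℝ), ((z.1 + z.2) / 2 : ℝ)))) ⁻¹'
        (Set.univ ×ˢ B) = ∅ := by
      ext z
      simp only [Set.mem_preimage, Set.mem_prod, Set.mem_empty_iff_false, iff_false, not_and]
      intro _
      intro hmem
      exact absurd (hBΩ hmem) (diag_not_mem_Omega _)
    have e2 : (fun z : ℝ × ℝ => ((((z.1 + z.2) / 2 : ℝ), ((z.1 + z.2) / 2 : ℝ)), z)) ⁻¹'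
        (Set.univ ×ˢ B) = B := by
      ext z; simp [Set.mem_prod]
    rw [e1, e2, measure_empty, zero_add]
  · unfold diagPlan
    rw [Measure.add_apply, Measure.map_apply measurable_diag1 measurableSet_bad,
      Measure.map_apply measurable_diag2 measurableSet_bad]
    have e1 : (fun z : ℝ × ℝ => (z, (((z.1 + z.2) / 2 : ℝ), ((z.1 + z.2) / 2 : ℝ)))) ⁻¹'
        {w : (ℝ × ℝ) × (ℝ × ℝ) | ¬ w.1.1 ≤ w.1.2 ∨ ¬ w.2.1 ≤ w.2.2}
        = {z : ℝ × ℝ | ¬ z.1 ≤ z.2} := by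
      ext z; simp
    have e2 : (fun z : ℝ × ℝ => ((((z.1 + z.2) / 2 : ℝ), ((z.1 + z.2) / 2 : ℝ)), z)) ⁻¹'
        {w : (ℝ × ℝ) × (ℝ × ℝ) | ¬ w.1.1 ≤ w.1.2 ∨ ¬ w.2.1 ≤ w.2.2}
        = {z : ℝ × ℝ | ¬ z.1 ≤ z.2} := by
      ext z; simp
    have hsub : {z : ℝ × ℝ | ¬ z.1 ≤ z.2} ⊆ {z : ℝ × ℝ | ¬ z.1 < z.2} := by
      intro z hz
      simp only [Set.mem_setOf_eq, not_le] at hz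
      simp only [Set.mem_setOf_eq, not_lt]
      linarith
    rw [e1, e2, measure_mono_null hsub hμΩ, measure_mono_null hsub hνΩ, add_zero]

lemma cost1_to_diag (z : ℝ × ℝ) (h : z.1 ≤ z.2) :
    cost1 z (((z.1 + z.2) / 2 : ℝ), ((z.1 + z.2) / 2 : ℝ))
      = ENNReal.ofReal ((z.2 - z.1) / Real.sqrt 2) := by
  unfold cost1
  have h1 : ((z.1 - ((z.1 + z.2) / 2)) ^ 2 + (z.2 - ((z.1 + z.2) / 2)) ^ 2 : ℝ)
      = ((z.2 - z.1) / Real.sqrt 2) ^ 2 := by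
    rw [div_pow, Real.sq_sqrt (by norm_num : (0:ℝ) ≤ 2)]
    ring
  show ENNReal.ofReal (Real.sqrt ((z.1 - ((z.1 + z.2) / 2)) ^ 2 + (z.2 - ((z.1 + z.2) / 2)) ^ 2)) = _
  rw [h1, Real.sqrt_sq (div_nonneg (by linarith) (Real.sqrt_nonneg 2))]

lemma cost1_from_diag (z : ℝ × ℝ) (h : z.1 ≤ z.2) :
    cost1 ((((z.1 + z.2) / 2 : ℝ), ((z.1 + z.2) / 2 : ℝ))) z
      = ENNReal.ofReal ((z.2 - z.1) / Real.sqrt 2) := by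
  unfold cost1
  have h1 : (((((z.1 + z.2) / 2)) - z.1) ^ 2 + ((((z.1 + z.2) / 2)) - z.2) ^ 2 : ℝ)
      = ((z.2 - z.1) / Real.sqrt 2) ^ 2 := by
    rw [div_pow, Real.sq_sqrt (by norm_num : (0:ℝ) ≤ 2)]
    ring
  show ENNReal.ofReal (Real.sqrt (((((z.1 + z.2) / 2)) - z.1) ^ 2 + ((((z.1 + z.2) / 2)) - z.2) ^ 2)) = _
  rw [h1, Real.sqrt_sq (div_nonneg (by linarith) (Real.sqrt_nonneg 2))]

lemma diagPlan_cost {μ ν : Measure (ℝ × ℝ)}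
    (hμΩ : μ {z : ℝ × ℝ | ¬ z.1 < z.2} = 0) (hνΩ : ν {z : ℝ × ℝ | ¬ z.1 < z.2} = 0) :
    FGcost 1 (diagPlan μ ν) ≤ (∫⁻ z, ENNReal.ofReal ((z.2 - z.1) / Real.sqrt 2) ∂μ)
      + ∫⁻ z, ENNReal.ofReal ((z.2 - z.1) / Real.sqrt 2) ∂ν := by
  rw [FGcost_one]
  unfold diagPlan
  rw [lintegral_add_measure, lintegral_map measurable_cost1 measurable_diag1,
    lintegral_map measurable_cost1 measurable_diag2]
  have hμae : ∀ᵐ z ∂μ, z.1 < z.2 := by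
    rw [ae_iff]; exact hμΩ
  have hνae : ∀ᵐ z ∂ν, z.1 < z.2 := by
    rw [ae_iff]; exact hνΩ
  apply add_le_add
  · apply lintegral_mono_ae
    filter_upwards [hμae] with z hz
    exact le_of_eq (cost1_to_diag z hz.le)
  · apply lintegral_mono_ae
    filter_upwards [hνae] with z hz
    exact le_of_eq (cost1_from_diag z hz.le)

/-! ### Sanitizing a plan to a sigma-finite one -/

lemma meas_pers_lt_top {μ : Measure (ℝ × ℝ)}
    (hμ : ∫⁻ z, ENNReal.ofReal ((z.2 - z.1) / Real.sqrt 2) ∂μ < ⊤) (k : ℕ) :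
    μ {z : ℝ × ℝ | 1 / (k + 1 : ℝ) ≤ z.2 - z.1} < ⊤ := by
  set c := ENNReal.ofReal (1 / ((k + 1 : ℝ) * Real.sqrt 2)) with hc
  have hc0 : c ≠ 0 := by
    rw [hc, Ne, ENNReal.ofReal_eq_zero, not_le]
    have : (0:ℝ) < (k + 1 : ℝ) * Real.sqrt 2 := by positivity
    positivity
  have hsub : {z : ℝ × ℝ | 1 / (k + 1 : ℝ) ≤ z.2 - z.1}
      ⊆ {z : ℝ × ℝ | c ≤ ENNReal.ofReal ((z.2 - z.1) / Real.sqrt 2)} := by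
    intro z hz
    simp only [Set.mem_setOf_eq] at hz ⊢
    rw [hc]
    apply ENNReal.ofReal_le_ofReal
    rw [show ((1:ℝ) / ((k + 1 : ℝ) * Real.sqrt 2)) = (1 / (k + 1 : ℝ)) / Real.sqrt 2 by
      rw [div_div]]
    gcongr
  have hmar := mul_meas_ge_le_lintegral₀
    (by fun_prop : AEMeasurable (fun z : ℝ × ℝ =>
      ENNReal.ofReal ((z.2 - z.1) / Real.sqrt 2)) μ) c
  by_contra htop
  rw [not_lt, top_le_iff] at htop
  have h1 : μ {z : ℝ × ℝ | c ≤ ENNReal.ofReal ((z.2 - z.1) / Real.sqrt 2)} = ⊤ :=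
    top_le_iff.mp (htop ▸ measure_mono hsub)
  rw [h1, ENNReal.mul_top hc0] at hmar
  exact hμ.not_ge hmar

lemma sanitize {μ ν : Measure (ℝ × ℝ)} {γ : Measure ((ℝ × ℝ) × (ℝ × ℝ))} (hγ : γ ∈ Adm μ ν)
    (hμpers : ∫⁻ z, ENNReal.ofReal ((z.2 - z.1) / Real.sqrt 2) ∂μ < ⊤)
    (hνpers : ∫⁻ z, ENNReal.ofReal ((z.2 - z.1) / Real.sqrt 2) ∂ν < ⊤) :
    ∃ γ' : Measure ((ℝ × ℝ) × (ℝ × ℝ)),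
      γ' ∈ Adm μ ν ∧ FGcost 1 γ' ≤ FGcost 1 γ ∧ SigmaFinite γ' := by
  obtain ⟨h1, h2, h3⟩ := hγ
  set T : Set ((ℝ × ℝ) × (ℝ × ℝ)) := (Omega ×ˢ Set.univ) ∪ (Set.univ ×ˢ Omega) with hT
  have hTmeas : MeasurableSet T :=
    (measurableSet_Omega.prod MeasurableSet.univ).union
      (MeasurableSet.univ.prod measurableSet_Omega)
  refine ⟨γ.restrict T, ⟨?_, ?_, ?_⟩, ?_, ?_⟩
  · intro A hA hAΩ
    rw [Measure.restrict_apply (hA.prod MeasurableSet.univ)]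
    rw [show (A ×ˢ Set.univ) ∩ T = A ×ˢ (Set.univ : Set (ℝ × ℝ)) by
      apply Set.inter_eq_left.mpr
      intro w hw
      exact Or.inl ⟨hAΩ hw.1, trivial⟩]
    exact h1 A hA hAΩ
  · intro B hB hBΩ
    rw [Measure.restrict_apply (MeasurableSet.univ.prod hB)]
    rw [show ((Set.univ : Set (ℝ × ℝ)) ×ˢ B) ∩ T = (Set.univ : Set (ℝ × ℝ)) ×ˢ B by
      apply Set.inter_eq_left.mpr
      intro w hw
      exact Or.inr ⟨trivial, hBΩ hw.2⟩]
    exact h2 B hB hBΩ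
  · rw [Measure.restrict_apply measurableSet_bad]
    exact measure_mono_null Set.inter_subset_left h3
  · exact lintegral_mono' Measure.restrict_le_self (le_refl _)
  · -- sigma-finiteness
    set E : ℕ → Set (ℝ × ℝ) := fun k => {z : ℝ × ℝ | 1 / (k + 1 : ℝ) ≤ z.2 - z.1} with hE
    have hEmeas : ∀ k, MeasurableSet (E k) := fun k =>
      measurableSet_le measurable_const (by fun_prop)
    have hEΩ : ∀ k, E k ⊆ Omega := by
      intro k z hz
      have hk : (0:ℝ) < 1 / (k + 1 : ℝ) := by positivity
      have : (0:ℝ) < z.2 - z.1 := lt_of_lt_of_le hk hz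
      exact (show z.1 < z.2 by linarith)
    constructor
    constructor
    refine ⟨fun n => Nat.casesOn n Tᶜ
      (fun k => (E k ×ˢ Set.univ) ∪ (Set.univ ×ˢ E k)), fun _ => trivial, ?_, ?_⟩
    · intro n
      cases n with
      | zero =>
        show γ.restrict T Tᶜ < ⊤
        rw [Measure.restrict_apply hTmeas.compl, Set.compl_inter_self]
        simp
      | succ k =>
        show γ.restrict T ((E k ×ˢ Set.univ) ∪ (Set.univ ×ˢ E k)) < ⊤
        apply lt_of_le_of_lt (measure_union_le _ _)
        have hu1 : γ.restrict T (E k ×ˢ Set.univ) < ⊤ := by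
          apply lt_of_le_of_lt (Measure.restrict_le_self _)
          rw [h1 (E k) (hEmeas k) (hEΩ k)]
          exact meas_pers_lt_top hμpers k
        have hu2 : γ.restrict T (Set.univ ×ˢ E k) < ⊤ := by
          apply lt_of_le_of_lt (Measure.restrict_le_self _)
          rw [h2 (E k) (hEmeas k) (hEΩ k)]
          exact meas_pers_lt_top hνpers k
        exact ENNReal.add_lt_top.mpr ⟨hu1, hu2⟩
    · ext w
      simp only [Set.mem_iUnion, Set.mem_univ, iff_true]
      by_cases hw : w ∈ T
      · rcases hw with hw | hw
        · have hp : (0:ℝ) < w.1.2 - w.1.1 := by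
            have := hw.1
            simp only [Omega, Set.mem_setOf_eq] at this
            linarith
          obtain ⟨k, hk⟩ := exists_nat_one_div_lt hp
          exact ⟨k + 1, Or.inl ⟨le_of_lt hk, trivial⟩⟩
        · have hp : (0:ℝ) < w.2.2 - w.2.1 := by
            have := hw.2
            simp only [Omega, Set.mem_setOf_eq] at this
            linarith
          obtain ⟨k, hk⟩ := exists_nat_one_div_lt hp
          exact ⟨k + 1, Or.inr ⟨trivial, le_of_lt hk⟩⟩
      · exact ⟨0, hw⟩

/-! ### Main theorem -/

/-- Stability for `p = 1`: for all persistence measures `μ, ν ∈ M¹(Ω)` (Radon measures on the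
open half-plane with finite `1`-persistence), the Sliced Figalli–Gigli distance
`SFG₁(μ,ν) = (1/√2) ∫_ℝ FG₁(π_t#μ̃, π_t#ν̃) dt` satisfies `SFG₁(μ,ν) ≤ 3·FG₁(μ,ν)`. -/
theorem stmt10 (μ ν : Measure (ℝ × ℝ))
    (hμΩ : μ {z : ℝ × ℝ | ¬ z.1 < z.2} = 0) (hνΩ : ν {z : ℝ × ℝ | ¬ z.1 < z.2} = 0)
    (hμpers : ∫⁻ z, ENNReal.ofReal ((z.2 - z.1) / Real.sqrt 2) ∂μ < ⊤)
    (hνpers : ∫⁻ z, ENNReal.ofReal ((z.2 - z.1) / Real.sqrt 2) ∂ν < ⊤) :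
    (1 / Real.sqrt 2) *
      ∫ t : ℝ, (FG 1 (Measure.map (projGeo t) (normalizePM μ))
        (Measure.map (projGeo t) (normalizePM ν))).toReal
      ≤ 3 * (FG 1 μ ν).toReal := by
  by_cases hint : Integrable (fun t : ℝ => (FG 1 (Measure.map (projGeo t) (normalizePM μ))
      (Measure.map (projGeo t) (normalizePM ν))).toReal) volume
  swap
  · rw [integral_undef hint, mul_zero]
    positivity
  rw [FG_one μ ν]
  set C := ⨅ γ ∈ Adm μ ν, FGcost 1 γ with hC
  have hCtop : C ≠ ⊤ := by
    have h1 : C ≤ FGcost 1 (diagPlan μ ν) := by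
      rw [hC]
      exact iInf₂_le (diagPlan μ ν) (diagPlan_mem hμΩ hνΩ)
    have h2 : FGcost 1 (diagPlan μ ν) < ⊤ :=
      lt_of_le_of_lt (diagPlan_cost hμΩ hνΩ) (ENNReal.add_lt_top.mpr ⟨hμpers, hνpers⟩)
    exact (lt_of_le_of_lt h1 h2).ne
  apply le_of_forall_pos_le_add
  intro ε hε
  -- a near-optimal plan
  obtain ⟨γ, hγmem, hγcost⟩ : ∃ γ ∈ Adm μ ν, FGcost 1 γ < C + ENNReal.ofReal (ε / 3) := by
    by_contra hcon
    push_neg at hcon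
    have hle : C + ENNReal.ofReal (ε / 3) ≤ C := by
      rw [hC]
      exact le_iInf₂ hcon
    exact absurd hle (not_le.mpr (ENNReal.lt_add_right hCtop
      (ENNReal.ofReal_pos.mpr (by linarith)).ne'))
  obtain ⟨γ', hγ'mem, hγ'le, hγ'sf⟩ := sanitize hγmem hμpers hνpers
  have hγ'cost : FGcost 1 γ' < C + ENNReal.ofReal (ε / 3) := lt_of_le_of_lt hγ'le hγcost
  clear hγcost hγmem
  obtain ⟨γ, hγmem, hγcost⟩ : ∃ γ : Measure ((ℝ × ℝ) × (ℝ × ℝ)), γ ∈ Adm μ ν ∧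
      (FGcost 1 γ < C + ENNReal.ofReal (ε / 3) ∧ SigmaFinite γ) :=
    ⟨γ', hγ'mem, hγ'cost, hγ'sf⟩
  obtain ⟨hγcost, hγsf⟩ := hγcost
  haveI := hγsf
  have hγfin : FGcost 1 γ ≠ ⊤ :=
    (hγcost.trans (ENNReal.add_lt_top.mpr ⟨hCtop.lt_top, ENNReal.ofReal_lt_top⟩)).ne
  -- pointwise FG bound via the sliced plan
  have hFGt : ∀ t : ℝ, FG 1 (Measure.map (projGeo t) (normalizePM μ))
      (Measure.map (projGeo t) (normalizePM ν)) ≤ ∫⁻ w, Ffun t w ∂γ := by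
    intro t
    rw [FG_one]
    exact le_of_le_of_eq (iInf₂_le (planT t γ) (planT_mem hγmem t)) (planT_cost t γ)
  -- swap the order of integration
  have hswap : ∫⁻ t, ∫⁻ w, Ffun t w ∂γ ∂volume = ∫⁻ w, ∫⁻ t, Ffun t w ∂volume ∂γ := by
    exact lintegral_lintegral_swap (μ := (volume : Measure ℝ)) (ν := γ)
      measurable_Ffun2.aemeasurable
  have hae : ∀ᵐ w ∂γ, w.1.1 ≤ w.1.2 ∧ w.2.1 ≤ w.2.2 := by
    rw [ae_iff]
    have heq : {w : (ℝ × ℝ) × (ℝ × ℝ) | ¬ (w.1.1 ≤ w.1.2 ∧ w.2.1 ≤ w.2.2)}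
        = {w : (ℝ × ℝ) × (ℝ × ℝ) | ¬ w.1.1 ≤ w.1.2 ∨ ¬ w.2.1 ≤ w.2.2} :=
      Set.ext fun w => not_and_or
    rw [heq]
    exact hγmem.2.2
  have hptw : ∀ᵐ w ∂γ, ∫⁻ t, Ffun t w ∂volume
      ≤ ENNReal.ofReal (3 * Real.sqrt 2) * cost1 w.1 w.2 := by
    filter_upwards [hae] with w hw
    have h := lintegral_Ffun_le (x := w.1) (y := w.2) hw.1 hw.2
    rwa [Prod.mk.eta] at h
  have hbound : ∫⁻ t, ∫⁻ w, Ffun t w ∂γ ∂volume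
      ≤ ENNReal.ofReal (3 * Real.sqrt 2) * FGcost 1 γ := by
    rw [hswap, FGcost_one, ← lintegral_const_mul _ measurable_cost1]
    exact lintegral_mono_ae hptw
  have hchain : ∫⁻ t, FG 1 (Measure.map (projGeo t) (normalizePM μ))
      (Measure.map (projGeo t) (normalizePM ν)) ∂volume
      ≤ ENNReal.ofReal (3 * Real.sqrt 2) * FGcost 1 γ :=
    le_trans (lintegral_mono hFGt) hbound
  have hRtop : ENNReal.ofReal (3 * Real.sqrt 2) * FGcost 1 γ ≠ ⊤ :=
    ENNReal.mul_ne_top ENNReal.ofReal_ne_top hγfin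
  -- relate the Bochner integral with the lower integral
  have heq : ∫ t : ℝ, (FG 1 (Measure.map (projGeo t) (normalizePM μ))
      (Measure.map (projGeo t) (normalizePM ν))).toReal
      = (∫⁻ t, ENNReal.ofReal ((FG 1 (Measure.map (projGeo t) (normalizePM μ))
          (Measure.map (projGeo t) (normalizePM ν))).toReal) ∂volume).toReal :=
    integral_eq_lintegral_of_nonneg_ae
      (Filter.Eventually.of_forall fun t => ENNReal.toReal_nonneg)
      hint.aestronglyMeasurable
  have hle2 : ∫⁻ t, ENNReal.ofReal ((FG 1 (Measure.map (projGeo t) (normalizePM μ))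
      (Measure.map (projGeo t) (normalizePM ν))).toReal) ∂volume
      ≤ ENNReal.ofReal (3 * Real.sqrt 2) * FGcost 1 γ := by
    refine le_trans (lintegral_mono fun t => ?_) hchain
    exact ENNReal.ofReal_toReal_le
  have hfinal1 : ∫ t : ℝ, (FG 1 (Measure.map (projGeo t) (normalizePM μ))
      (Measure.map (projGeo t) (normalizePM ν))).toReal
      ≤ (ENNReal.ofReal (3 * Real.sqrt 2) * FGcost 1 γ).toReal := by
    rw [heq]
    exact ENNReal.toReal_mono hRtop hle2
  have hmulR : (ENNReal.ofReal (3 * Real.sqrt 2) * FGcost 1 γ).toReal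
      = 3 * Real.sqrt 2 * (FGcost 1 γ).toReal := by
    rw [ENNReal.toReal_mul, ENNReal.toReal_ofReal (by positivity)]
  have hcostR : (FGcost 1 γ).toReal ≤ C.toReal + ε / 3 := by
    have h1 : (FGcost 1 γ).toReal ≤ (C + ENNReal.ofReal (ε / 3)).toReal :=
      ENNReal.toReal_mono (by
        exact (ENNReal.add_lt_top.mpr ⟨hCtop.lt_top, ENNReal.ofReal_lt_top⟩).ne) hγcost.le
    rwa [ENNReal.toReal_add hCtop ENNReal.ofReal_ne_top,
      ENNReal.toReal_ofReal (by linarith)] at h1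
  have hs2 : Real.sqrt 2 ≠ 0 := ne_of_gt sqrt_two_pos
  have hCR : (0:ℝ) ≤ (FGcost 1 γ).toReal := ENNReal.toReal_nonneg
  calc (1 / Real.sqrt 2) * ∫ t : ℝ, (FG 1 (Measure.map (projGeo t) (normalizePM μ))
        (Measure.map (projGeo t) (normalizePM ν))).toReal
      ≤ (1 / Real.sqrt 2) * (3 * Real.sqrt 2 * (C.toReal + ε / 3)) := by
        apply mul_le_mul_of_nonneg_left _ (by positivity)
        calc ∫ t : ℝ, (FG 1 (Measure.map (projGeo t) (normalizePM μ))
              (Measure.map (projGeo t) (normalizePM ν))).toReal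
            ≤ (ENNReal.ofReal (3 * Real.sqrt 2) * FGcost 1 γ).toReal := hfinal1
          _ = 3 * Real.sqrt 2 * (FGcost 1 γ).toReal := hmulR
          _ ≤ 3 * Real.sqrt 2 * (C.toReal + ε / 3) := by
              apply mul_le_mul_of_nonneg_left hcostR (by positivity)
    _ = 3 * C.toReal + ε := by
        field_simp
end

section
/- Let μ_n = Σ_{k=0}^{⌈n^p⌉} δ_{(k√2/n, (k+1)√2/n)} and ν_n = Σ_{k=0}^{⌈n^p⌉} δ_{((k+1/2)√2/n, (k+3/2)√2/n)}. Then FG_p(μ_n, ν_n)^p = Σ_{k=0}^{⌈n^p⌉} (1/n^p) ≥ 1: matching each point of μ_n to the corresponding shifted point of ν_n at distance 1/n (per-point cost n^{−p}) over more than n^p points gives total cost at least 1. -/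
open MeasureTheory

/-- `FG_p(μ,ν)^p`, the `p`-th power of the Figalli–Gigli distance. -/
noncomputable def FGpow (p : ℝ) (μ ν : Measure (ℝ × ℝ)) : ENNReal :=
  ⨅ γ ∈ Adm μ ν, FGcost p γ

/-- The `k`-th point of `μ_n`. -/
noncomputable def xpt (n k : ℕ) : ℝ × ℝ :=
  (((k : ℝ) * Real.sqrt 2 / n, ((k : ℝ) + 1) * Real.sqrt 2 / n) : ℝ × ℝ)

/-- The `k`-th point of `ν_n`. -/
noncomputable def ypt (n k : ℕ) : ℝ × ℝ :=
  ((((k : ℝ) + 1 / 2) * Real.sqrt 2 / n, ((k : ℝ) + 3 / 2) * Real.sqrt 2 / n) : ℝ × ℝ)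

lemma dist_xy_eq (n k : ℕ) (hn : (0:ℝ) < n) :
    Real.sqrt (((xpt n k).1 - (ypt n k).1) ^ 2 + ((xpt n k).2 - (ypt n k).2) ^ 2)
      = 1 / n := by
  have h2 : Real.sqrt 2 ^ 2 = 2 := Real.sq_sqrt (by norm_num)
  have e : ((xpt n k).1 - (ypt n k).1) ^ 2 + ((xpt n k).2 - (ypt n k).2) ^ 2
      = Real.sqrt 2 ^ 2 * (1 / n) ^ 2 / 2 := by
    simp only [xpt, ypt]
    field_simp
    ring_nf
  rw [e, h2, show (2:ℝ) * (1/(n:ℝ))^2 / 2 = (1/(n:ℝ))^2 by ring,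
    Real.sqrt_sq (by positivity)]

lemma dist_lb_pt (n k j : ℕ) (hn : (0:ℝ) < n) :
    1 / (n:ℝ) ≤ Real.sqrt (((xpt n k).1 - (ypt n j).1) ^ 2 + ((xpt n k).2 - (ypt n j).2) ^ 2) := by
  apply Real.le_sqrt_of_sq_le
  have h2 : Real.sqrt 2 ^ 2 = 2 := Real.sq_sqrt (by norm_num)
  set u : ℝ := 1 / n with hu
  have hodd : (1:ℝ) ≤ (2 * ((k:ℝ) - (j:ℝ)) - 1) ^ 2 := by
    rcases le_or_gt k j with h | h
    · have hkj : (k:ℝ) ≤ j := Nat.cast_le.2 h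
      nlinarith
    · have hkj : (j:ℝ) + 1 ≤ k := by exact_mod_cast h
      nlinarith
  have e1 : (xpt n k).1 - (ypt n j).1 = ((k:ℝ) - (j:ℝ) - 1/2) * Real.sqrt 2 * u := by
    simp only [xpt, ypt, hu]; field_simp; ring
  have e2 : (xpt n k).2 - (ypt n j).2 = ((k:ℝ) - (j:ℝ) - 1/2) * Real.sqrt 2 * u := by
    simp only [xpt, ypt, hu]; field_simp; ring
  rw [e1, e2]
  have h2u : Real.sqrt 2 ^ 2 * u ^ 2 = 2 * u ^ 2 := by rw [h2]
  nlinarith [mul_le_mul_of_nonneg_right hodd (sq_nonneg u), sq_nonneg u]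

lemma dist_lb_diag (n k : ℕ) (hn : (0:ℝ) < n) (t : ℝ) :
    1 / (n:ℝ) ≤ Real.sqrt (((xpt n k).1 - t) ^ 2 + ((xpt n k).2 - t) ^ 2) := by
  apply Real.le_sqrt_of_sq_le
  have h2 : Real.sqrt 2 ^ 2 = 2 := Real.sq_sqrt (by norm_num)
  set u : ℝ := 1 / n with hu
  set a : ℝ := (xpt n k).1 with ha
  set b : ℝ := (xpt n k).2 with hb
  have hab : b - a = Real.sqrt 2 * u := by
    simp only [xpt, ha, hb, hu]; field_simp; ring
  have hab2 : (b - a) ^ 2 = 2 * u ^ 2 := by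
    rw [hab, mul_pow, h2]
  nlinarith [sq_nonneg (a + b - 2 * t)]

/-- For the staircase diagrams `μ_n = Σ_{k=0}^{⌈n^p⌉} δ_{(k√2/n,(k+1)√2/n)}` and
`ν_n = Σ_{k=0}^{⌈n^p⌉} δ_{((k+1/2)√2/n,(k+3/2)√2/n)}`, one has
`FG_p(μ_n,ν_n)^p = Σ_{k=0}^{⌈n^p⌉} 1/n^p ≥ 1`. -/
theorem stmt17 (p : ℝ) (hp : 1 ≤ p) (n : ℕ) (hn : 1 ≤ n) :
    FGpow p
        (∑ k ∈ Finset.range (⌈(n : ℝ) ^ p⌉₊ + 1),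
          Measure.dirac (((k : ℝ) * Real.sqrt 2 / n, ((k : ℝ) + 1) * Real.sqrt 2 / n) : ℝ × ℝ))
        (∑ k ∈ Finset.range (⌈(n : ℝ) ^ p⌉₊ + 1),
          Measure.dirac ((((k : ℝ) + 1 / 2) * Real.sqrt 2 / n,
            ((k : ℝ) + 3 / 2) * Real.sqrt 2 / n) : ℝ × ℝ))
      = ∑ k ∈ Finset.range (⌈(n : ℝ) ^ p⌉₊ + 1), ENNReal.ofReal (1 / (n : ℝ) ^ p) ∧
    (1 : ENNReal) ≤ ∑ k ∈ Finset.range (⌈(n : ℝ) ^ p⌉₊ + 1), ENNReal.ofReal (1 / (n : ℝ) ^ p) := by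
  have hn0 : (0:ℝ) < n := by exact_mod_cast hn
  have hp0 : (0:ℝ) ≤ p := le_trans zero_le_one hp
  have hnp : (0:ℝ) < (n:ℝ) ^ p := Real.rpow_pos_of_pos hn0 p
  set N : ℕ := ⌈(n : ℝ) ^ p⌉₊ with hNdef
  set F : Finset ℕ := Finset.range (N + 1) with hF
  -- identify the diagrams with xpt/ypt
  have hμx : ∀ k : ℕ, (((k : ℝ) * Real.sqrt 2 / n, ((k : ℝ) + 1) * Real.sqrt 2 / n) : ℝ × ℝ)
      = xpt n k := fun k => rfl
  have hνy : ∀ k : ℕ, ((((k : ℝ) + 1 / 2) * Real.sqrt 2 / n,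
      ((k : ℝ) + 3 / 2) * Real.sqrt 2 / n) : ℝ × ℝ) = ypt n k := fun k => rfl
  simp only [hμx, hνy]
  set μ : Measure (ℝ × ℝ) := ∑ k ∈ F, Measure.dirac (xpt n k) with hμ
  set ν : Measure (ℝ × ℝ) := ∑ k ∈ F, Measure.dirac (ypt n k) with hν
  -- the value 1/n^p
  have hval : ((1:ℝ)/n) ^ p = 1 / (n:ℝ) ^ p := by
    rw [Real.div_rpow zero_le_one (le_of_lt hn0), Real.one_rpow]
  -- the sum equals (N+1) * ofReal (1/n^p)
  have hsum : ∑ _k ∈ F, ENNReal.ofReal (1 / (n : ℝ) ^ p)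
      = (N + 1 : ℕ) * ENNReal.ofReal (1 / (n : ℝ) ^ p) := by
    rw [Finset.sum_const, hF, Finset.card_range, nsmul_eq_mul]
  -- points are strictly above the diagonal
  have hs2 : (0:ℝ) < Real.sqrt 2 := Real.sqrt_pos.2 (by norm_num)
  have hxΩ : ∀ k : ℕ, xpt n k ∈ Omega := by
    intro k
    simp only [xpt, Omega, Set.mem_setOf_eq]
    rw [div_lt_div_iff_of_pos_right hn0]
    nlinarith
  have hyΩ : ∀ k : ℕ, ypt n k ∈ Omega := by
    intro k
    simp only [ypt, Omega, Set.mem_setOf_eq]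
    rw [div_lt_div_iff_of_pos_right hn0]
    nlinarith
  have hxle : ∀ k : ℕ, (xpt n k).1 ≤ (xpt n k).2 := fun k => le_of_lt (hxΩ k)
  have hyle : ∀ k : ℕ, (ypt n k).1 ≤ (ypt n k).2 := fun k => le_of_lt (hyΩ k)
  -- the candidate optimal plan
  set γ₀ : Measure ((ℝ × ℝ) × (ℝ × ℝ)) :=
    ∑ k ∈ F, Measure.dirac ((xpt n k, ypt n k)) with hγ₀def
  have hγ₀adm : γ₀ ∈ Adm μ ν := by
    refine ⟨?_, ?_, ?_⟩
    · intro A _ _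
      simp only [hγ₀def, hμ, Measure.finset_sum_apply, Measure.dirac_apply]
      refine Finset.sum_congr rfl fun k _ => ?_
      by_cases h : xpt n k ∈ A
      · rw [Set.indicator_of_mem h, Set.indicator_of_mem (Set.mk_mem_prod h (Set.mem_univ _))]; rfl
      · rw [Set.indicator_of_notMem h, Set.indicator_of_notMem (fun hc => h hc.1)]
    · intro B _ _
      simp only [hγ₀def, hν, Measure.finset_sum_apply, Measure.dirac_apply]
      refine Finset.sum_congr rfl fun k _ => ?_
      by_cases h : ypt n k ∈ B
      · rw [Set.indicator_of_mem h, Set.indicator_of_mem (Set.mk_mem_prod (Set.mem_univ _) h)]; rfl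
      · rw [Set.indicator_of_notMem h, Set.indicator_of_notMem (fun hc => h hc.2)]
    · simp only [hγ₀def, Measure.finset_sum_apply, Measure.dirac_apply,
        Set.indicator_apply, Set.mem_setOf_eq]
      refine Finset.sum_eq_zero fun k _ => ?_
      have hnot : ¬(¬(xpt n k).1 ≤ (xpt n k).2 ∨ ¬(ypt n k).1 ≤ (ypt n k).2) := by
        push_neg
        exact ⟨hxle k, hyle k⟩
      rw [if_neg hnot]
  -- cost of the candidate plan
  have hcost₀ : FGcost p γ₀ = ∑ _k ∈ F, ENNReal.ofReal (1 / (n : ℝ) ^ p) := by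
    rw [FGcost, hγ₀def, lintegral_finset_sum_measure]
    refine Finset.sum_congr rfl fun k _ => ?_
    rw [lintegral_dirac]
    congr 1
    rw [show ((xpt n k, ypt n k) : (ℝ×ℝ)×(ℝ×ℝ)).1 = xpt n k from rfl]
    rw [show ((xpt n k, ypt n k) : (ℝ×ℝ)×(ℝ×ℝ)).2 = ypt n k from rfl]
    rw [dist_xy_eq n k hn0, hval]
  -- the finite support sets
  set Xs : Finset (ℝ × ℝ) := F.image (xpt n) with hXs
  set Ys : Finset (ℝ × ℝ) := F.image (ypt n) with hYs
  have hXsub : (Xs : Set (ℝ × ℝ)) ⊆ Omega := by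
    intro z hz
    obtain ⟨k, -, rfl⟩ := Finset.mem_image.mp hz
    exact hxΩ k
  have hYsub : (Ys : Set (ℝ × ℝ)) ⊆ Omega := by
    intro z hz
    obtain ⟨k, -, rfl⟩ := Finset.mem_image.mp hz
    exact hyΩ k
  have hΩmeas : MeasurableSet Omega :=
    (isOpen_lt continuous_fst continuous_snd).measurableSet
  -- lower bound for any admissible plan
  have hlower : ∀ γ ∈ Adm μ ν, (∑ _k ∈ F, ENNReal.ofReal (1 / (n : ℝ) ^ p)) ≤ FGcost p γ := by
    intro γ hγ
    obtain ⟨hγ1, hγ2, hγ3⟩ := hγ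
    have hX0 : γ ((Omega \ ↑Xs) ×ˢ Set.univ) = 0 := by
      rw [hγ1 _ (hΩmeas.diff Xs.measurableSet) Set.diff_subset]
      rw [hμ, Measure.finset_sum_apply]
      refine Finset.sum_eq_zero fun k hk => ?_
      rw [Measure.dirac_apply, Set.indicator_of_notMem
        (fun h => h.2 (Finset.mem_coe.mpr (Finset.mem_image_of_mem _ hk)))]
    have hY0 : γ (Set.univ ×ˢ (Omega \ ↑Ys)) = 0 := by
      rw [hγ2 _ (hΩmeas.diff Ys.measurableSet) Set.diff_subset]
      rw [hν, Measure.finset_sum_apply]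
      refine Finset.sum_eq_zero fun k hk => ?_
      rw [Measure.dirac_apply, Set.indicator_of_notMem
        (fun h => h.2 (Finset.mem_coe.mpr (Finset.mem_image_of_mem _ hk)))]
    have hae1 := measure_eq_zero_iff_ae_notMem.mp hX0
    have hae2 := measure_eq_zero_iff_ae_notMem.mp hY0
    have hae3 := measure_eq_zero_iff_ae_notMem.mp hγ3
    have hmono : ∀ᵐ w ∂γ, (↑Xs ×ˢ (Set.univ : Set (ℝ×ℝ))).indicator
        (fun _ => ENNReal.ofReal (1 / (n : ℝ) ^ p)) w
        ≤ ENNReal.ofReal ((Real.sqrt ((w.1.1 - w.2.1) ^ 2 + (w.1.2 - w.2.2) ^ 2)) ^ p) := by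
      filter_upwards [hae1, hae2, hae3] with w hw1 hw2 hw3
      by_cases hx : w.1 ∈ (Xs : Set (ℝ × ℝ))
      · rw [Set.indicator_of_mem (Set.mk_mem_prod hx (Set.mem_univ _))]
        obtain ⟨k, -, hxk⟩ := Finset.mem_image.mp hx
        simp only [Set.mem_setOf_eq, not_or, not_not] at hw3
        have hd : 1 / (n:ℝ) ≤ Real.sqrt ((w.1.1 - w.2.1) ^ 2 + (w.1.2 - w.2.2) ^ 2) := by
          by_cases hy : w.2 ∈ (Ys : Set (ℝ × ℝ))
          · obtain ⟨j, -, hyj⟩ := Finset.mem_image.mp hy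
            rw [← hxk, ← hyj]
            exact dist_lb_pt n k j hn0
          · have hyΩ' : w.2 ∉ Omega := fun h => hw2 ⟨Set.mem_univ _, h, hy⟩
            have heq : w.2.2 = w.2.1 :=
              le_antisymm (not_lt.mp hyΩ') hw3.2
            rw [← hxk]
            have := dist_lb_diag n k hn0 w.2.1
            rw [heq] at *
            simpa [heq] using dist_lb_diag n k hn0 w.2.1
        calc ENNReal.ofReal (1 / (n : ℝ) ^ p)
            = ENNReal.ofReal (((1:ℝ)/n) ^ p) := by rw [hval]
          _ ≤ _ := ENNReal.ofReal_le_ofReal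
              (Real.rpow_le_rpow (by positivity) hd hp0)
      · rw [Set.indicator_of_notMem (fun h => hx h.1)]
        exact zero_le
    have hXcard : γ ((↑Xs : Set (ℝ×ℝ)) ×ˢ Set.univ) = (N + 1 : ℕ) := by
      rw [hγ1 _ Xs.measurableSet hXsub, hμ, Measure.finset_sum_apply]
      have : ∀ k ∈ F, Measure.dirac (xpt n k) (↑Xs : Set (ℝ×ℝ)) = 1 := by
        intro k hk
        rw [Measure.dirac_apply, Set.indicator_of_mem
          (Finset.mem_coe.mpr (Finset.mem_image_of_mem _ hk))]
        rfl
      rw [Finset.sum_congr rfl this, Finset.sum_const, hF, Finset.card_range, nsmul_eq_mul,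
        mul_one]
    calc ∑ _k ∈ F, ENNReal.ofReal (1 / (n : ℝ) ^ p)
        = ENNReal.ofReal (1 / (n : ℝ) ^ p) * γ ((↑Xs : Set (ℝ×ℝ)) ×ˢ Set.univ) := by
          rw [hXcard, hsum, mul_comm]
      _ = ∫⁻ w, (↑Xs ×ˢ (Set.univ : Set (ℝ×ℝ))).indicator
            (fun _ => ENNReal.ofReal (1 / (n : ℝ) ^ p)) w ∂γ := by
          rw [lintegral_indicator (Xs.measurableSet.prod MeasurableSet.univ),
            setLIntegral_const]
      _ ≤ FGcost p γ := lintegral_mono_ae hmono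
  -- conclusion
  have heq : FGpow p μ ν = ∑ _k ∈ F, ENNReal.ofReal (1 / (n : ℝ) ^ p) := by
    refine le_antisymm ?_ (le_iInf₂ hlower)
    calc FGpow p μ ν ≤ FGcost p γ₀ := iInf₂_le γ₀ hγ₀adm
      _ = _ := hcost₀
  have hge : (1 : ENNReal) ≤ ∑ _k ∈ F, ENNReal.ofReal (1 / (n : ℝ) ^ p) := by
    rw [hsum]
    have h1 : ENNReal.ofReal ((n:ℝ) ^ p) ≤ ((N + 1 : ℕ) : ENNReal) := by
      rw [← ENNReal.ofReal_natCast]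
      apply ENNReal.ofReal_le_ofReal
      calc (n:ℝ) ^ p ≤ (N : ℝ) := Nat.le_ceil _
        _ ≤ ((N + 1 : ℕ) : ℝ) := by push_cast; linarith
    calc (1 : ENNReal)
        = ENNReal.ofReal ((n:ℝ) ^ p) * ENNReal.ofReal (1 / (n : ℝ) ^ p) := by
          rw [← ENNReal.ofReal_mul (le_of_lt hnp), mul_one_div_cancel (ne_of_gt hnp)]
          simp
      _ ≤ ((N + 1 : ℕ) : ENNReal) * ENNReal.ofReal (1 / (n : ℝ) ^ p) :=
          mul_le_mul_left h1 _
  exact ⟨heq, hge⟩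
end

section
/- Let η be a finite signed Borel measure on ℝ and u > 0. If η is invariant under translation by 2u (i.e. τ_{2u} # η = η where τ_{2u}(w) = w + 2u), then η = 0. -/
open MeasureTheory

/-- A finite signed Borel measure on `ℝ` that is invariant under translation by `2u`
for some `u > 0` must vanish. -/
theorem stmt19 (η : SignedMeasure ℝ) (u : ℝ) (hu : 0 < u)
    (hinv : η.map (fun w : ℝ => w + 2 * u) = η) : η = 0 := by
  have hmeas : Measurable (fun w : ℝ => w + 2 * u) := measurable_add_const _
  -- basic invariance on sets
  have h1 : ∀ s : Set ℝ, MeasurableSet s → η ((fun w : ℝ => w + 2 * u) ⁻¹' s) = η s := by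
    intro s hs
    conv_rhs => rw [← hinv]
    rw [VectorMeasure.map_apply _ hmeas hs]
  -- key lemma: sets inside an interval of length 2u have measure 0
  have key : ∀ (a : ℝ) (s : Set ℝ), MeasurableSet s → s ⊆ Set.Ico a (a + 2 * u) → η s = 0 := by
    intro a s hs hsub
    set f : ℕ → Set ℝ := fun n => (fun w : ℝ => w + 2 * u * n) ⁻¹' s with hf
    have hfm : ∀ n, MeasurableSet (f n) := fun n => (measurable_add_const _) hs
    have hfval : ∀ n, η (f n) = η s := by
      intro n
      induction n with
      | zero => simp [hf]
      | succ n ih =>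
        have hpre : f (n + 1) = (fun w : ℝ => w + 2 * u) ⁻¹' f n := by
          ext w
          simp only [hf, Set.mem_preimage, Nat.cast_add, Nat.cast_one]
          ring_nf
        rw [hpre, h1 _ (hfm n), ih]
    have hdisj : Pairwise (Function.onFun Disjoint f) := by
      intro n m hnm
      have : ∀ n m : ℕ, n < m → Disjoint (f n) (f m) := by
        intro n m hlt
        rw [Set.disjoint_left]
        intro w hwn hwm
        have h₁ := hsub hwn
        have h₂ := hsub hwm
        simp only [Set.mem_Ico] at h₁ h₂
        have hnm1 : (n : ℝ) + 1 ≤ m := by exact_mod_cast hlt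
        nlinarith [h₁.2, h₂.1, h₁.1]
      rcases hnm.lt_or_gt with h | h
      · exact this _ _ h
      · exact (this _ _ h).symm
    have hsum : HasSum (fun n : ℕ => η (f n)) (η (⋃ n, f n)) :=
      VectorMeasure.hasSum_of_disjoint_iUnion hfm hdisj
    simp only [hfval] at hsum
    have := hsum.summable.tendsto_atTop_zero
    exact tendsto_nhds_unique tendsto_const_nhds this
  -- decompose an arbitrary measurable set
  ext s hs
  rw [VectorMeasure.zero_apply]
  have hdecomp : s = ⋃ k : ℤ, s ∩ Set.Ico (2 * u * k) (2 * u * (k + 1)) := by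
    ext w
    simp only [Set.mem_iUnion, Set.mem_inter_iff, Set.mem_Ico]
    constructor
    · intro hw
      refine ⟨⌊w / (2 * u)⌋, hw, ?_, ?_⟩
      · have := Int.floor_le (w / (2 * u))
        calc 2 * u * ⌊w / (2 * u)⌋ ≤ 2 * u * (w / (2 * u)) := by
              apply mul_le_mul_of_nonneg_left this (by linarith)
          _ = w := by field_simp
      · have := Int.lt_floor_add_one (w / (2 * u))
        calc w = 2 * u * (w / (2 * u)) := by field_simp
          _ < 2 * u * (⌊w / (2 * u)⌋ + 1) := by
              apply mul_lt_mul_of_pos_left this (by linarith)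
    · rintro ⟨k, hw, _⟩; exact hw
  have hpm : ∀ k : ℤ, MeasurableSet (s ∩ Set.Ico (2 * u * k) (2 * u * (k + 1))) :=
    fun k => hs.inter measurableSet_Ico
  have hpd : Pairwise (Function.onFun Disjoint fun k : ℤ => s ∩ Set.Ico (2 * u * (k : ℝ)) (2 * u * (k + 1))) := by
    intro k l hkl
    have : ∀ k l : ℤ, k < l →
        Disjoint (s ∩ Set.Ico (2 * u * (k : ℝ)) (2 * u * (k + 1)))
          (s ∩ Set.Ico (2 * u * (l : ℝ)) (2 * u * (l + 1))) := by
      intro k l hlt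
      rw [Set.disjoint_left]
      rintro w ⟨-, h₁⟩ ⟨-, h₂⟩
      simp only [Set.mem_Ico] at h₁ h₂
      have hkl1 : (k : ℝ) + 1 ≤ l := by exact_mod_cast hlt
      nlinarith [h₁.2, h₂.1]
    rcases hkl.lt_or_gt with h | h
    · exact this _ _ h
    · exact (this _ _ h).symm
  rw [hdecomp, VectorMeasure.of_disjoint_iUnion hpm hpd]
  have hz : ∀ k : ℤ, η (s ∩ Set.Ico (2 * u * k) (2 * u * (k + 1))) = 0 := by
    intro k
    apply key (2 * u * k) _ (hpm k)
    intro w hw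
    rcases hw with ⟨-, hw⟩
    simp only [Set.mem_Ico] at hw ⊢
    constructor
    · exact hw.1
    · calc w < 2 * u * (k + 1) := hw.2
        _ = 2 * u * k + 2 * u := by ring
  simp [hz]
end
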